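/- arXiv:1403.6037 — 9 statements merged into one kernel-verified Lean document; each statement's English description precedes it below -/
import Mathlib

section
/- Let K be an algebraically closed field, 𝔊 a finite group, and A a finitely generated commutative K-algebra on which 𝔊 acts by K-algebra automorphisms. Then the following are equivalent: (i) 𝔊 acts freely on the maximal ideals of A, i.e. g(m) ≠ m for every maximal ideal m of A and every g ≠ 1 in 𝔊; (ii) A^𝔊 ≤ A is a Galois extension in the sense of Chase–Harrison–Rosenberg, i.e. there exist finitely many elements x_1,…,x_m, y_1,…,y_m ∈ A such that for every g ∈ 𝔊 the sum ∑_{i=1}^m x_i · g(y_i) equals 1 if g = 1 and equals 0 otherwise. -/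
universe u

section Aux

variable (K : Type u) [Field K] [IsAlgClosed K]
  (𝔊 : Type u) [Group 𝔊]
  (A : Type u) [CommRing A] [Algebra K A] [MulSemiringAction 𝔊 A] [SMulCommClass 𝔊 K A]

/-- If `g` fixes a maximal ideal of a f.g. algebra over an algebraically closed field,
then `g` acts trivially modulo that ideal. -/
lemma aux_smul_sub_mem (hfg : Algebra.FiniteType K A)
    (m : Ideal A) (hm : m.IsMaximal) (g : 𝔊)
    (hg : Ideal.comap (MulSemiringAction.toRingHom 𝔊 A g) m = m) (a : A) :
    g • a - a ∈ m := by
  -- the residue field is `K`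
  letI : Field (A ⧸ m) := Ideal.Quotient.field m
  haveI : Algebra.FiniteType K (A ⧸ m) :=
    Algebra.FiniteType.trans hfg (Algebra.FiniteType.of_surjective
      (AlgHom.mk' (Ideal.Quotient.mkₐ A m).toRingHom
        (fun _ _ => rfl)) (Ideal.Quotient.mkₐ_surjective A m))
  haveI : Module.Finite K (A ⧸ m) := finite_of_finite_type_of_isJacobsonRing K (A ⧸ m)
  haveI : Algebra.IsIntegral K (A ⧸ m) := Algebra.IsIntegral.of_finite K (A ⧸ m)
  have hsurj : Function.Surjective (algebraMap K (A ⧸ m)) :=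
    IsAlgClosed.algebraMap_bijective_of_isIntegral.2
  obtain ⟨k, hk⟩ := hsurj (Ideal.Quotient.mk m a)
  have h1 : a - algebraMap K A k ∈ m := by
    have : Ideal.Quotient.mk m (a - algebraMap K A k) = 0 := by
      rw [map_sub, ← hk]
      simp [Ideal.Quotient.algebraMap_eq, Ideal.Quotient.mk_algebraMap]
    exact (Ideal.Quotient.eq_zero_iff_mem).mp this
  have h2 : g • (a - algebraMap K A k) ∈ m := by
    have : a - algebraMap K A k ∈ Ideal.comap (MulSemiringAction.toRingHom 𝔊 A g) m := by
      rw [hg]; exact h1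
    simpa [Ideal.mem_comap] using this
  have h3 : g • algebraMap K A k = algebraMap K A k := by
    rw [Algebra.algebraMap_eq_smul_one, smul_comm, smul_one]
  have h4 : g • a - algebraMap K A k ∈ m := by
    have := h2
    rwa [smul_sub, h3] at this
  have := m.sub_mem h4 h1
  simpa using this

/-- For each `g ≠ 1` with no fixed maximal ideal, there is a "separating pair". -/
lemma aux_separating (hfg : Algebra.FiniteType K A)
    (hfree : ∀ m : Ideal A, m.IsMaximal → ∀ g : 𝔊, g ≠ 1 →
        Ideal.comap (MulSemiringAction.toRingHom 𝔊 A g) m ≠ m)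
    (g : 𝔊) (hg : g ≠ 1) :
    ∃ (n : ℕ) (x y : Fin n → A),
      (∑ i, x i * y i) = 1 ∧ (∑ i, x i * g • y i) = 0 := by
  set s : Set A := Set.range (fun a : A => a - g • a) with hs
  have hspan : Ideal.span s = ⊤ := by
    by_contra h
    obtain ⟨m, hm, hle⟩ := Ideal.exists_le_maximal _ h
    refine hfree m hm g hg ?_
    ext a
    simp only [Ideal.mem_comap, MulSemiringAction.toRingHom_apply]
    constructor
    · intro ha
      have h1 : a - g • a ∈ m := hle (Ideal.subset_span ⟨a, rfl⟩)
      have := m.add_mem ha h1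
      simpa using this
    · intro ha
      have h1 : a - g • a ∈ m := hle (Ideal.subset_span ⟨a, rfl⟩)
      have := m.sub_mem ha h1
      simpa using this
  have h1 : (1 : A) ∈ Ideal.span s := hspan ▸ Submodule.mem_top
  obtain ⟨n, c, v, hcv⟩ := Submodule.mem_span_set'.mp h1
  -- choose representatives
  choose a ha using fun i => (v i).2
  have hcv' : ∑ i, c i * (a i - g • a i) = 1 := by
    rw [← hcv]
    refine Finset.sum_congr rfl fun i _ => ?_
    rw [smul_eq_mul, ← ha i]
  set d : A := ∑ i, c i * g • a i with hd
  refine ⟨n + 1, Fin.snoc c (-d), Fin.snoc a 1, ?_, ?_⟩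
  · rw [Fin.sum_univ_castSucc]
    simp only [Fin.snoc_castSucc, Fin.snoc_last]
    have hcv'' : (∑ i : Fin n, c i * a i) - (∑ i : Fin n, c i * g • a i) = 1 := by
      rw [← Finset.sum_sub_distrib, ← hcv']
      exact Finset.sum_congr rfl fun i _ => by ring
    have : ∑ i : Fin n, c i * a i = 1 + d := by rw [hd]; linear_combination hcv''
    rw [this]; ring
  · rw [Fin.sum_univ_castSucc]
    simp only [Fin.snoc_castSucc, Fin.snoc_last, smul_eq_mul]
    rw [smul_one]
    rw [hd]; ring

end Aux

/-- Let `K` be an algebraically closed field, `𝔊` a finite group and `A`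
a finitely generated commutative `K`-algebra on which `𝔊` acts by `K`-algebra
automorphisms.  Then `𝔊` acts freely on the maximal ideals of `A` (i.e. `g(m) ≠ m` for
every maximal ideal `m` and every `g ≠ 1`) if and only if `A^𝔊 ≤ A` is a Galois extension
in the sense of Chase–Harrison–Rosenberg, i.e. there exist finitely many elements
`x₁,…,x_m, y₁,…,y_m ∈ A` with `∑ i, x_i · g(y_i) = δ_{1,g}` for every `g ∈ 𝔊`. -/
theorem free_action_iff_CHR_Galois
    (K : Type u) [Field K] [IsAlgClosed K]
    (𝔊 : Type u) [Group 𝔊] [Fintype 𝔊] [DecidableEq 𝔊]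
    (A : Type u) [CommRing A] [Algebra K A] [MulSemiringAction 𝔊 A] [SMulCommClass 𝔊 K A]
    (hfg : Algebra.FiniteType K A) :
    (∀ m : Ideal A, m.IsMaximal → ∀ g : 𝔊, g ≠ 1 →
        Ideal.comap (MulSemiringAction.toRingHom 𝔊 A g) m ≠ m)
      ↔
    (∃ (m : ℕ) (x y : Fin m → A),
        ∀ g : 𝔊, (∑ i, x i * g • y i) = if g = 1 then 1 else 0) := by
  constructor
  · intro hfree
    -- per-element separating pairs
    choose n x y hx1 hx0 using fun g : {g : 𝔊 // g ≠ 1} =>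
      aux_separating K 𝔊 A hfg hfree g.1 g.2
    -- product construction
    let ι := ∀ g : {g : 𝔊 // g ≠ 1}, Fin (n g)
    let e := (Fintype.equivFin ι).symm
    refine ⟨Fintype.card ι,
      fun i => ∏ g, x g (e i g), fun i => ∏ g, y g (e i g), fun h => ?_⟩
    have key : ∑ i : Fin (Fintype.card ι), (∏ g, x g (e i g)) * h • (∏ g, y g (e i g))
        = ∏ g : {g : 𝔊 // g ≠ 1}, ∑ j : Fin (n g), x g j * h • y g j := by
      rw [Finset.prod_univ_sum, Fintype.piFinset_univ]
      refine Fintype.sum_equiv e _ _ fun i => ?_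
      rw [Finset.prod_mul_distrib]
      congr 1
      show MulSemiringAction.toRingHom 𝔊 A h _ = _
      rw [map_prod]
      rfl
    rw [key]
    by_cases hh : h = 1
    · subst hh
      simp only [if_pos rfl]
      refine Finset.prod_eq_one fun g _ => ?_
      simpa using hx1 g
    · rw [if_neg hh]
      exact Finset.prod_eq_zero (Finset.mem_univ (⟨h, hh⟩ : {g : 𝔊 // g ≠ 1})) (hx0 ⟨h, hh⟩)
  · rintro ⟨m, x, y, hxy⟩ M hM g hg hgM
    have h0 : ∑ i, x i * g • y i = 0 := by rw [hxy, if_neg hg]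
    have h1 : ∑ i, x i * y i = 1 := by simpa using hxy 1
    have hmem : (1 : A) ∈ M := by
      have : ∑ i, x i * y i - ∑ i, x i * g • y i ∈ M := by
        rw [← Finset.sum_sub_distrib]
        refine Ideal.sum_mem _ fun i _ => ?_
        have : x i * y i - x i * g • y i = -(x i * (g • y i - y i)) := by ring
        rw [this]
        exact M.neg_mem (M.mul_mem_left _ (aux_smul_sub_mem K 𝔊 A hfg M hM g hgM (y i)))
      rwa [h1, h0, sub_zero] at this
    exact hM.ne_top (Ideal.eq_top_of_isUnit_mem M hmem isUnit_one)
end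

section
/- Let A be a Noetherian integrally closed (normal) domain and 𝔊 a finite group acting faithfully on A by ring automorphisms, with invariant ring B = A^𝔊 and trace map tr : A → B, tr(a) = ∑_{g∈𝔊} g(a). Then the following are equivalent: (1) B ≤ A is a Galois extension in the sense of Chase–Harrison–Rosenberg, i.e. there exist x_1,…,x_m, y_1,…,y_m ∈ A with ∑_{i=1}^m x_i·g(y_i) = δ_{1,g} for all g ∈ 𝔊; (2) A is a finitely generated projective B-module and every B-module homomorphism λ : A → B has the form λ(x) = tr(a·x) for some a ∈ A (i.e. Hom_B(A,B) = A·tr). -/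
universe u

/-- The subring of `G`-invariant elements `A^G`. -/
def fixedSubring (G A : Type u) [Group G] [CommRing A] [MulSemiringAction G A] : Subring A where
  carrier := {a | ∀ g : G, g • a = a}
  mul_mem' := fun ha hb g => by rw [smul_mul', ha g, hb g]
  add_mem' := fun ha hb g => by rw [smul_add, ha g, hb g]
  one_mem' := fun g => smul_one g
  zero_mem' := fun g => smul_zero g
  neg_mem' := fun ha g => by rw [smul_neg, ha g]

set_option linter.unusedSectionVars false

section Aux
variable (𝔊 A : Type u) [Group 𝔊] [Fintype 𝔊] [DecidableEq 𝔊] [CommRing A]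
  [MulSemiringAction 𝔊 A]

lemma trace_mem (a : A) : (∑ g : 𝔊, g • a) ∈ fixedSubring 𝔊 A := by
  intro h
  rw [Finset.smul_sum]
  exact Fintype.sum_equiv (Equiv.mulLeft h) _ _ (fun g => (mul_smul h g a).symm)

/-- The trace form `x ↦ tr (y * x)` as a `B`-linear map `A →ₗ[B] B`. -/
def trL (y : A) : A →ₗ[fixedSubring 𝔊 A] (fixedSubring 𝔊 A) where
  toFun x := ⟨∑ g : 𝔊, g • (y * x), trace_mem 𝔊 A _⟩
  map_add' x₁ x₂ := by
    ext
    simp [mul_add, smul_add, Finset.sum_add_distrib]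
  map_smul' b x := by
    ext
    have : ∀ g : 𝔊, g • (y * ((b : A) * x)) = (b : A) * g • (y * x) := by
      intro g
      rw [mul_left_comm, smul_mul', b.2 g]
    simp only [RingHom.id_apply]
    show ∑ g : 𝔊, g • (y * ((b : A) * x)) = (b : A) * ∑ g : 𝔊, g • (y * x)
    rw [Finset.mul_sum]
    exact Finset.sum_congr rfl fun g _ => this g

lemma trL_coe (y x : A) : ((trL 𝔊 A y x : fixedSubring 𝔊 A) : A) = ∑ g : 𝔊, g • (y * x) := rfl

variable {𝔊 A}

lemma key_identity {m : ℕ} (x y : Fin m → A)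
    (hxy : ∀ g : 𝔊, (∑ i, x i * g • y i) = if g = 1 then 1 else 0) (a : A) :
    ∑ i, (∑ g : 𝔊, g • (y i * a)) * x i = a := by
  calc ∑ i, (∑ g : 𝔊, g • (y i * a)) * x i
      = ∑ i, ∑ g : 𝔊, x i * g • y i * (g • a) := by
        refine Finset.sum_congr rfl fun i _ => ?_
        rw [Finset.sum_mul]
        exact Finset.sum_congr rfl fun g _ => by rw [smul_mul']; ring
    _ = ∑ g : 𝔊, (∑ i, x i * g • y i) * (g • a) := by
        rw [Finset.sum_comm]
        exact Finset.sum_congr rfl fun g _ => (Finset.sum_mul _ _ _).symm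
    _ = a := by simp [hxy]

end Aux

/-- Proposition on the Dedekind different / Noether's homological
different.  Let `A` be a Noetherian integrally closed domain and `𝔊` a finite group
acting faithfully on `A` by ring automorphisms with invariant ring `B = A^𝔊` and trace
map `tr(a) = ∑_{g ∈ 𝔊} g • a`.  Then `B ≤ A` is a Galois extension in the sense of
Chase–Harrison–Rosenberg (existence of elements `x_i, y_i` with
`∑ i, x_i · g(y_i) = δ_{1,g}`) if and only if `A` is a finitely generated projective
`B`-module and every `B`-module homomorphism `λ : A → B` is of the form
`λ(x) = tr(a·x)` for some `a ∈ A`, i.e. `Hom_B(A,B) = A · tr`. -/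
theorem CHR_Galois_iff_projective_and_dual_generated_by_trace
    (𝔊 A : Type u) [Group 𝔊] [Fintype 𝔊] [DecidableEq 𝔊]
    [CommRing A] [IsDomain A] [IsNoetherianRing A] [IsIntegrallyClosed A]
    [MulSemiringAction 𝔊 A] [FaithfulSMul 𝔊 A] :
    (∃ (m : ℕ) (x y : Fin m → A),
        ∀ g : 𝔊, (∑ i, x i * g • y i) = if g = 1 then 1 else 0)
      ↔
    (Module.Finite (fixedSubring 𝔊 A) A ∧ Module.Projective (fixedSubring 𝔊 A) A ∧
      ∀ l : A →ₗ[fixedSubring 𝔊 A] (fixedSubring 𝔊 A),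
        ∃ a : A, ∀ x : A, (l x : A) = ∑ g : 𝔊, g • (a * x)) := by
  set B := fixedSubring 𝔊 A with hB
  constructor
  · rintro ⟨m, x, y, hxy⟩
    -- section/retraction pair
    let f : A →ₗ[B] (Fin m → B) := LinearMap.pi fun i => trL 𝔊 A (y i)
    let s : (Fin m → B) →ₗ[B] A :=
      { toFun := fun c => ∑ i, (c i : A) * x i
        map_add' := fun c₁ c₂ => by simp [add_mul, Finset.sum_add_distrib]
        map_smul' := fun b c => by
          simp only [RingHom.id_apply]
          show ∑ i, ((b * c i : B) : A) * x i = (b : A) * ∑ i, (c i : A) * x i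
          rw [Finset.mul_sum]
          exact Finset.sum_congr rfl fun i _ => by push_cast; ring }
    have hsf : ∀ a : A, s (f a) = a := fun a => key_identity x y hxy a
    have hcomp : s.comp f = LinearMap.id := LinearMap.ext hsf
    refine ⟨Module.Finite.of_surjective s (fun a => ⟨f a, hsf a⟩),
      Module.Projective.of_split f s hcomp, fun l => ?_⟩
    refine ⟨∑ i, (l (x i) : A) * y i, fun t => ?_⟩
    have h1 : (l t : A) = ∑ i, ((trL 𝔊 A (y i) t : B) : A) * (l (x i) : A) := by
      conv_lhs => rw [show t = s (f t) from (hsf t).symm]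
      show ((l (∑ i, ((trL 𝔊 A (y i) t : B) : A) * x i) : B) : A) = _
      have h2 : (∑ i, ((trL 𝔊 A (y i) t : B) : A) * x i) = ∑ i, (trL 𝔊 A (y i) t) • x i := rfl
      rw [h2, map_sum]
      push_cast
      refine Finset.sum_congr rfl fun i _ => ?_
      rw [map_smul]
      rfl
    rw [h1, eq_comm]
    calc ∑ g : 𝔊, g • ((∑ i, ((l (x i) : A)) * y i) * t)
        = ∑ g : 𝔊, ∑ i, (l (x i) : A) * g • (y i * t) := by
          refine Finset.sum_congr rfl fun g _ => ?_
          rw [Finset.sum_mul, Finset.smul_sum]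
          refine Finset.sum_congr rfl fun i _ => ?_
          rw [mul_assoc, smul_mul', (l (x i)).2 g]
      _ = ∑ i, (l (x i) : A) * ∑ g : 𝔊, g • (y i * t) := by
          rw [Finset.sum_comm]
          exact Finset.sum_congr rfl fun i _ => (Finset.mul_sum _ _ _).symm
      _ = ∑ i, ((trL 𝔊 A (y i) t : B) : A) * (l (x i) : A) := by
          refine Finset.sum_congr rfl fun i _ => ?_
          rw [trL_coe, mul_comm]
  · rintro ⟨hfin, hproj, hdual⟩
    obtain ⟨n, π, hπ⟩ := Module.Finite.exists_fin' B A
    obtain ⟨s, hs⟩ := Module.projective_lifting_property π LinearMap.id hπ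
    set x : Fin n → A := fun i => π (fun j => if i = j then 1 else 0) with hx
    have hkey : ∀ a : A, ∑ i, ((s a i : B) : A) * x i = a := by
      intro a
      have h3 := LinearMap.pi_apply_eq_sum_univ π (s a)
      have h2 : π (s a) = a := by
        have := LinearMap.congr_fun hs a; simpa using this
      rw [h2] at h3
      conv_rhs => rw [h3]
      rfl
    choose y hy using fun i : Fin n => hdual ((LinearMap.proj i).comp s)
    refine ⟨n, x, y, fun g => ?_⟩
    have hc : ∀ t : A, ∑ h : 𝔊, (∑ i, x i * h • y i) * (h • t) = t := by
      intro t
      calc ∑ h : 𝔊, (∑ i, x i * h • y i) * (h • t)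
          = ∑ h : 𝔊, ∑ i, x i * h • (y i * t) := by
            refine Finset.sum_congr rfl fun h _ => ?_
            rw [Finset.sum_mul]
            exact Finset.sum_congr rfl fun i _ => by rw [smul_mul']; ring
        _ = ∑ i, x i * ∑ h : 𝔊, h • (y i * t) := by
            rw [Finset.sum_comm]
            exact Finset.sum_congr rfl fun i _ => (Finset.mul_sum _ _ _).symm
        _ = ∑ i, x i * (((LinearMap.proj i).comp s t : B) : A) :=
            Finset.sum_congr rfl fun i _ => by rw [← hy i t]
        _ = t := by
            conv_rhs => rw [← hkey t]
            exact Finset.sum_congr rfl fun i _ => mul_comm _ _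
    -- Dedekind independence of characters
    have hinj : Function.Injective
        (fun g : 𝔊 => (MulSemiringAction.toRingHom 𝔊 A g).toMonoidHom) := by
      intro g g' h
      exact eq_of_smul_eq_smul fun a : A => DFunLike.congr_fun h a
    have li := (linearIndependent_monoidHom A A).comp _ hinj
    have h0 : ∑ h : 𝔊, ((∑ i, x i * h • y i) - if h = 1 then 1 else 0) •
        ((fun g : 𝔊 => ((MulSemiringAction.toRingHom 𝔊 A g).toMonoidHom : A → A)) h) = 0 := by
      funext t
      simp only [Finset.sum_apply, Pi.smul_apply, smul_eq_mul, Pi.zero_apply]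
      have he : ∀ h : 𝔊, ((MulSemiringAction.toRingHom 𝔊 A h).toMonoidHom : A → A) t = h • t :=
        fun h => rfl
      simp only [he, sub_mul, Finset.sum_sub_distrib, hc t]
      simp
    have hfin := Fintype.linearIndependent_iff.mp li _ h0 g
    exact sub_eq_zero.mp hfin
end

section
/- Let k be a field of characteristic p > 0 and G a nontrivial finite p-group. Let D_k := k[X_g : g ∈ G]/(∑_{g∈G} X_g − 1), with x_g denoting the image of X_g, on which G acts by k-algebra automorphisms via (x_g)h = x_{gh}. Then D_k is a finitely generated trace-surjective k-G-algebra with point x_1 (tr(x_1) = 1); for every A ∈ 𝔗𝔰 and every point a ∈ A there is a unique morphism φ ∈ 𝔗𝔰(D_k, A) with φ(x_g) = (a)g for all g ∈ G; in particular D_k is universal (weakly initial) in 𝔗𝔰, and moreover D_k is an s-projective object of 𝔗𝔰. -/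
open scoped TensorProduct

set_option synthInstance.maxHeartbeats 1000000
set_option maxHeartbeats 1000000
set_option linter.unusedSectionVars false
set_option linter.unusedVariables false

universe u

section TSPreamble

variable (k G : Type u) [Field k] [Group G] [Fintype G]

/-- The invariant subalgebra `A^G` of a `k`-`G`-algebra `A`. -/
def invAlg (A : Type u) [CommRing A] [Algebra k A] [MulSemiringAction G A]
    [SMulCommClass G k A] : Subalgebra k A where
  carrier := {a | ∀ g : G, g • a = a}
  mul_mem' := fun ha hb g => by rw [smul_mul', ha g, hb g]
  add_mem' := fun ha hb g => by rw [smul_add, ha g, hb g]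
  algebraMap_mem' := fun c g => smul_algebraMap g c

/-- A `k`-`G`-algebra is trace-surjective if every invariant element is in the
image of the transfer (trace) map `a ↦ ∑_{g ∈ G} g • a`. -/
def IsTraceSurjective (A : Type u) [CommRing A] [MulSemiringAction G A] : Prop :=
  ∀ b : A, (∀ g : G, g • b = b) → ∃ a : A, (∑ g : G, g • a) = b

/-- Membership in the category `𝔗𝔰` of finitely generated trace-surjective
`k`-`G`-algebras. -/
def IsTS (A : Type u) [CommRing A] [Algebra k A] [MulSemiringAction G A] : Prop :=
  Algebra.FiniteType k A ∧ IsTraceSurjective G A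

/-- `G`-equivariance of a map. -/
def IsEquivariant {A B : Type u} [SMul G A] [SMul G B] (f : A → B) : Prop :=
  ∀ (g : G) (a : A), f (g • a) = g • f a

/-- `W` is a universal (weakly initial) object of `𝔗𝔰`: every object of `𝔗𝔰`
receives at least one morphism from `W`. -/
def IsUniversal (W : Type u) [CommRing W] [Algebra k W] [MulSemiringAction G W] : Prop :=
  ∀ (A : Type u) [CommRing A] [Algebra k A] [MulSemiringAction G A] [SMulCommClass G k A],
    IsTS k G A → ∃ f : W →ₐ[k] A, IsEquivariant G ⇑f

/-- `P` is an s-projective object of `𝔗𝔰`: any morphism from `P` lifts along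
surjective morphisms of `𝔗𝔰`. -/
def IsSProjective (P : Type u) [CommRing P] [Algebra k P] [MulSemiringAction G P] : Prop :=
  ∀ (A B : Type u) [CommRing A] [Algebra k A] [MulSemiringAction G A] [SMulCommClass G k A]
    [CommRing B] [Algebra k B] [MulSemiringAction G B] [SMulCommClass G k B],
    IsTS k G A → IsTS k G B →
    ∀ (α : A →ₐ[k] B), IsEquivariant G ⇑α → Function.Surjective ⇑α →
    ∀ (β : P →ₐ[k] B), IsEquivariant G ⇑β →
    ∃ θ : P →ₐ[k] A, IsEquivariant G ⇑θ ∧ α.comp θ = β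

/-- `Γ` is an s-generator of `𝔗𝔰`: every object of `𝔗𝔰` is the surjective image of a
finite tensor power of `Γ`; equivalently, for every `R ∈ 𝔗𝔰` there are finitely many
morphisms `Γ → R` whose images together generate `R` as a `k`-algebra. -/
def IsSGenerator (Γ : Type u) [CommRing Γ] [Algebra k Γ] [MulSemiringAction G Γ] : Prop :=
  ∀ (R : Type u) [CommRing R] [Algebra k R] [MulSemiringAction G R] [SMulCommClass G k R],
    IsTS k G R →
    ∃ (ℓ : ℕ) (f : Fin ℓ → (Γ →ₐ[k] R)),
      (∀ i, IsEquivariant G ⇑(f i)) ∧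
      Algebra.adjoin k (⋃ i, Set.range ⇑(f i)) = ⊤

end TSPreamble

section QuotAction

variable (k G : Type u) [Field k] [Group G] [Fintype G]

/-- The induced `G`-action on the quotient of a `k`-`G`-algebra by a `G`-stable ideal. -/
noncomputable def quotMSA (A : Type u) [CommRing A] [MulSemiringAction G A]
    (I : Ideal A) (hI : ∀ g : G, ∀ x ∈ I, g • x ∈ I) :
    MulSemiringAction G (A ⧸ I) where
  smul g := Ideal.quotientMap I (MulSemiringAction.toRingHom G A g)
    (fun x hx => Ideal.mem_comap.mpr (hI g x hx))
  one_smul x := by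
    obtain ⟨y, rfl⟩ := Ideal.Quotient.mk_surjective x
    show Ideal.quotientMap I _ _ _ = _
    rw [Ideal.quotientMap_mk]
    show Ideal.Quotient.mk I ((1 : G) • y) = _
    rw [one_smul]
  mul_smul g h x := by
    obtain ⟨y, rfl⟩ := Ideal.Quotient.mk_surjective x
    show Ideal.quotientMap I _ _ _ =
      Ideal.quotientMap I _ _ (Ideal.quotientMap I _ _ _)
    rw [Ideal.quotientMap_mk, Ideal.quotientMap_mk, Ideal.quotientMap_mk]
    show Ideal.Quotient.mk I ((g * h) • y) = Ideal.Quotient.mk I (g • h • y)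
    rw [mul_smul]
  smul_zero g := map_zero _
  smul_add g := map_add _
  smul_one g := map_one _
  smul_mul g := map_mul _

/-- The quotient action commutes with scalars. -/
lemma quotSCC (A : Type u) [CommRing A] [Algebra k A] [MulSemiringAction G A]
    [SMulCommClass G k A] (I : Ideal A) (hI : ∀ g : G, ∀ x ∈ I, g • x ∈ I) :
    letI := quotMSA G A I hI
    SMulCommClass G k (A ⧸ I) := by
  letI := quotMSA G A I hI
  refine ⟨fun g c x => ?_⟩
  obtain ⟨y, rfl⟩ := Ideal.Quotient.mk_surjective x
  show Ideal.quotientMap I _ _ (Ideal.Quotient.mk I (c • y))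
      = c • Ideal.quotientMap I _ _ (Ideal.Quotient.mk I y)
  rw [Ideal.quotientMap_mk, Ideal.quotientMap_mk]
  show Ideal.Quotient.mk I (g • c • y) = Ideal.Quotient.mk I (c • g • y)
  rw [smul_comm]

end QuotAction

section DkDef

variable (k G : Type u) [Field k] [Group G] [Fintype G]

/-- The (left-)regular `G`-action on `k[X_g : g ∈ G]`, `h • X_g = X_{h g}`. -/
noncomputable instance mvRegMSA : MulSemiringAction G (MvPolynomial G k) where
  smul h p := MvPolynomial.rename (fun g => h * g) p
  one_smul p := by
    show MvPolynomial.rename _ p = p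
    have : (fun g : G => (1 : G) * g) = id := by funext g; simp
    rw [this, MvPolynomial.rename_id, AlgHom.id_apply]
  mul_smul g h p := by
    show MvPolynomial.rename _ p = MvPolynomial.rename _ (MvPolynomial.rename _ p)
    rw [MvPolynomial.rename_rename]
    have : ((fun x : G => g * x) ∘ fun x : G => h * x) = fun x : G => (g * h) * x := by
      funext x; simp [mul_assoc]
    rw [this]
  smul_zero g := map_zero _
  smul_add g := map_add _
  smul_one g := map_one _
  smul_mul g := map_mul _

noncomputable instance mvRegSCC : SMulCommClass G k (MvPolynomial G k) :=
  ⟨fun g c p => map_smul (MvPolynomial.rename (fun x => g * x)).toLinearMap c p⟩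

@[simp] lemma mvReg_smul_X (h g : G) :
    h • (MvPolynomial.X g : MvPolynomial G k) = MvPolynomial.X (h * g) := by
  show MvPolynomial.rename _ (MvPolynomial.X g) = _
  rw [MvPolynomial.rename_X]

/-- The ideal `(∑_{g ∈ G} X_g − 1)` of `k[X_g : g ∈ G]`. -/
noncomputable def dIdeal : Ideal (MvPolynomial G k) :=
  Ideal.span {(∑ g : G, MvPolynomial.X g) - 1}

lemma dIdeal_stable : ∀ g : G, ∀ x ∈ dIdeal k G, g • x ∈ dIdeal k G := by
  intro g x hx
  rw [dIdeal, Ideal.mem_span_singleton] at hx ⊢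
  obtain ⟨c, rfl⟩ := hx
  refine ⟨g • c, ?_⟩
  rw [smul_mul']
  congr 1
  rw [smul_sub, smul_one, Finset.smul_sum]
  congr 1
  apply Fintype.sum_equiv (Equiv.mulLeft g)
  intro h
  rw [mvReg_smul_X]
  rfl

/-- The dehomogenized symmetric algebra `D_k` of the regular representation:
`k[X_g : g ∈ G]/(∑ X_g − 1)` with the regular `G`-action. -/
abbrev Dk : Type u := MvPolynomial G k ⧸ dIdeal k G

noncomputable instance : MulSemiringAction G (Dk k G) :=
  quotMSA G (MvPolynomial G k) (dIdeal k G) (dIdeal_stable k G)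

noncomputable instance : SMulCommClass G k (Dk k G) :=
  quotSCC k G (MvPolynomial G k) (dIdeal k G) (dIdeal_stable k G)

/-- The generators `x_g ∈ D_k`, images of the variables `X_g`. -/
noncomputable def xg (g : G) : Dk k G := Ideal.Quotient.mk (dIdeal k G) (MvPolynomial.X g)

end DkDef


section Aux

variable (k G : Type u) [Field k] [Group G] [Fintype G]

lemma Dk_smul_mk (g : G) (q : MvPolynomial G k) :
    g • (Ideal.Quotient.mk (dIdeal k G) q) = Ideal.Quotient.mk (dIdeal k G) (g • q) := by
  show Ideal.quotientMap (dIdeal k G) (MulSemiringAction.toRingHom G (MvPolynomial G k) g)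
      _ (Ideal.Quotient.mk (dIdeal k G) q) = _
  rw [Ideal.quotientMap_mk]
  rfl

lemma Dk_smul_xg (g h : G) : g • xg k G h = xg k G (g * h) := by
  rw [xg, Dk_smul_mk, mvReg_smul_X, xg]

lemma Dk_sum_xg : (∑ g : G, xg k G g) = 1 := by
  have h0 : Ideal.Quotient.mk (dIdeal k G)
      ((∑ g : G, MvPolynomial.X g) - 1) = 0 :=
    Ideal.Quotient.eq_zero_iff_mem.mpr (Ideal.subset_span rfl)
  rw [map_sub, map_sum, map_one, sub_eq_zero] at h0
  simpa [xg] using h0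

lemma Dk_tr_x1 : (∑ g : G, g • xg k G (1 : G)) = 1 := by
  simp only [Dk_smul_xg, mul_one]
  exact Dk_sum_xg k G

lemma aeval_smul_comm (A : Type u) [CommRing A] [Algebra k A] [MulSemiringAction G A]
    [SMulCommClass G k A] (a : A) (g : G) (q : MvPolynomial G k) :
    MvPolynomial.aeval (fun h : G => h • a) (g • q)
      = g • MvPolynomial.aeval (fun h : G => h • a) q := by
  have key : (MvPolynomial.aeval (fun h : G => h • a)).comp
      (MvPolynomial.rename (fun x : G => g * x) : MvPolynomial G k →ₐ[k] MvPolynomial G k) =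
      (MulSemiringAction.toAlgHom k A g).comp (MvPolynomial.aeval (fun h : G => h • a)) := by
    apply MvPolynomial.algHom_ext
    intro h
    simp [mul_smul, MulSemiringAction.toAlgHom]
    rfl
  have := DFunLike.congr_fun key q
  exact this

/-- The morphism `D_k → A` attached to a point `a` of `A`. -/
noncomputable def pointHom (A : Type u) [CommRing A] [Algebra k A] [MulSemiringAction G A]
    [SMulCommClass G k A] (a : A) (ha : (∑ g : G, g • a) = 1) :
    Dk k G →ₐ[k] A :=
  Ideal.Quotient.liftₐ (dIdeal k G) (MvPolynomial.aeval (fun h : G => h • a)) (by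
    intro x hx
    rw [dIdeal, Ideal.mem_span_singleton] at hx
    obtain ⟨c, rfl⟩ := hx
    have h0 : MvPolynomial.aeval (fun h : G => h • a)
        (((∑ g : G, MvPolynomial.X g) - 1 : MvPolynomial G k)) = 0 := by
      rw [map_sub, map_sum, map_one]
      simp only [MvPolynomial.aeval_X]
      rw [ha, sub_self]
    rw [map_mul, h0, zero_mul])

lemma pointHom_mk (A : Type u) [CommRing A] [Algebra k A] [MulSemiringAction G A]
    [SMulCommClass G k A] (a : A) (ha : (∑ g : G, g • a) = 1) (q : MvPolynomial G k) :
    pointHom k G A a ha (Ideal.Quotient.mk (dIdeal k G) q)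
      = MvPolynomial.aeval (fun h : G => h • a) q := rfl

lemma pointHom_equivariant (A : Type u) [CommRing A] [Algebra k A] [MulSemiringAction G A]
    [SMulCommClass G k A] (a : A) (ha : (∑ g : G, g • a) = 1) :
    IsEquivariant G ⇑(pointHom k G A a ha) := by
  intro g x
  obtain ⟨q, rfl⟩ := Ideal.Quotient.mk_surjective x
  rw [Dk_smul_mk, pointHom_mk, pointHom_mk, aeval_smul_comm]

lemma pointHom_xg (A : Type u) [CommRing A] [Algebra k A] [MulSemiringAction G A]
    [SMulCommClass G k A] (a : A) (ha : (∑ g : G, g • a) = 1) (g : G) :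
    pointHom k G A a ha (xg k G g) = g • a := by
  rw [xg, pointHom_mk]
  simp

lemma pointHom_unique (A : Type u) [CommRing A] [Algebra k A] [MulSemiringAction G A]
    [SMulCommClass G k A] (a : A) (ha : (∑ g : G, g • a) = 1)
    (ψ : Dk k G →ₐ[k] A) (hψ : ∀ g : G, ψ (xg k G g) = g • a) :
    ψ = pointHom k G A a ha := by
  apply Ideal.Quotient.algHom_ext
  apply MvPolynomial.algHom_ext
  intro h
  have : (Ideal.Quotient.mkₐ k (dIdeal k G)) (MvPolynomial.X h) = xg k G h := rfl
  simp only [AlgHom.comp_apply, this, hψ, pointHom_xg]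

end Aux

/-- Let `k` be a field of characteristic `p > 0` and `G` a nontrivial
finite `p`-group.  Let `D_k := k[X_g : g ∈ G]/(∑_{g∈G} X_g − 1)`, with `x_g` the image of
`X_g`, on which `G` acts via the regular permutation action on the variables.  Then
`D_k` is a finitely generated trace-surjective `k`-`G`-algebra with point `x_1`
(i.e. `tr(x_1) = 1`); for every `A ∈ 𝔗𝔰` and every point `a ∈ A` there is a unique
morphism `φ ∈ 𝔗𝔰(D_k, A)` with `φ(x_g) = (a)g` for all `g ∈ G`; in particular `D_k` is
universal (weakly initial) in `𝔗𝔰`, and moreover `D_k` is s-projective in `𝔗𝔰`. -/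
theorem Dk_is_trace_surjective_pointed_universal_and_s_projective
    (k G : Type u) [Field k] [Group G] [Fintype G] [Nontrivial G]
    (p : ℕ) (hp : p.Prime) [CharP k p] (hG : IsPGroup p G) :
    IsTS k G (Dk k G) ∧
    (∑ g : G, g • xg k G (1 : G)) = 1 ∧
    (∀ (A : Type u) [CommRing A] [Algebra k A] [MulSemiringAction G A] [SMulCommClass G k A],
      IsTS k G A → ∀ a : A, (∑ g : G, g • a) = 1 →
        ∃! φ : Dk k G →ₐ[k] A, IsEquivariant G ⇑φ ∧ ∀ g : G, φ (xg k G g) = g • a) ∧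
    IsUniversal k G (Dk k G) ∧
    IsSProjective k G (Dk k G) := by
  have hpt := Dk_tr_x1 k G
  have hTS : IsTS k G (Dk k G) := by
    constructor
    · exact Algebra.FiniteType.of_surjective
        (Ideal.Quotient.mkₐ k (dIdeal k G)) (Ideal.Quotient.mkₐ_surjective k _)
    · intro b hb
      refine ⟨xg k G 1 * b, ?_⟩
      calc (∑ g : G, g • (xg k G 1 * b)) = ∑ g : G, (g • xg k G 1) * (g • b) := by
            simp [smul_mul']
        _ = (∑ g : G, g • xg k G 1) * b := by
            rw [Finset.sum_mul]; exact Finset.sum_congr rfl fun g _ => by rw [hb g]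
        _ = b := by rw [hpt, one_mul]
  have huniq : ∀ (A : Type u) [CommRing A] [Algebra k A] [MulSemiringAction G A]
      [SMulCommClass G k A],
      IsTS k G A → ∀ a : A, (∑ g : G, g • a) = 1 →
        ∃! φ : Dk k G →ₐ[k] A, IsEquivariant G ⇑φ ∧ ∀ g : G, φ (xg k G g) = g • a := by
    intro A _ _ _ _ _ a ha
    refine ⟨pointHom k G A a ha, ⟨pointHom_equivariant k G A a ha, pointHom_xg k G A a ha⟩, ?_⟩
    intro ψ hψ
    exact pointHom_unique k G A a ha ψ hψ.2
  have hpoint : ∀ (A : Type u) [CommRing A] [Algebra k A] [MulSemiringAction G A]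
      [SMulCommClass G k A], IsTS k G A → ∃ a : A, (∑ g : G, g • a) = 1 := by
    intro A _ _ _ _ hA
    exact hA.2 1 (fun g => smul_one g)
  refine ⟨hTS, hpt, huniq, ?_, ?_⟩
  · intro A _ _ _ _ hA
    obtain ⟨a, ha⟩ := hpoint A hA
    exact ⟨pointHom k G A a ha, pointHom_equivariant k G A a ha⟩
  · intro A B _ _ _ _ _ _ _ _ hA hB α hαe hαs β hβe
    -- b := β (x_1) is a point of B
    set b : B := β (xg k G 1) with hb
    have hbpt : (∑ g : G, g • b) = 1 := by
      rw [hb]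
      calc (∑ g : G, g • β (xg k G 1)) = ∑ g : G, β (g • xg k G 1) := by
            exact Finset.sum_congr rfl fun g _ => (hβe g _).symm
        _ = β (∑ g : G, g • xg k G 1) := (map_sum β _ _).symm
        _ = 1 := by rw [hpt, map_one]
    -- pick a preimage a₀ of b and a point e of A, correct a₀ to a point a of A over b
    obtain ⟨a₀, ha₀⟩ := hαs b
    obtain ⟨e, he⟩ := hpoint A hA
    set c : A := ∑ g : G, g • a₀ with hcdef
    have hcinv : ∀ g : G, g • c = c := by
      intro g
      rw [hcdef, Finset.smul_sum]
      apply Fintype.sum_equiv (Equiv.mulLeft g)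
      intro h
      rw [smul_smul]
      rfl
    set a : A := a₀ + e * (1 - c) with hadef
    have hatr : (∑ g : G, g • a) = 1 := by
      rw [hadef]
      have : ∀ g : G, g • (a₀ + e * (1 - c)) = g • a₀ + (g • e) * (1 - c) := by
        intro g
        rw [smul_add, smul_mul']
        congr 1
        rw [smul_sub, smul_one, hcinv g]
      simp only [this]
      rw [Finset.sum_add_distrib, ← Finset.sum_mul, he, ← hcdef, one_mul]
      ring
    have hαa : α a = b := by
      have hαc : α c = 1 := by
        rw [hcdef, map_sum]
        calc (∑ g : G, α (g • a₀)) = ∑ g : G, g • α a₀ := by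
              exact Finset.sum_congr rfl fun g _ => hαe g _
          _ = ∑ g : G, g • b := by rw [ha₀]
          _ = 1 := hbpt
      rw [hadef, map_add, map_mul, map_sub, map_one, hαc, sub_self, mul_zero, add_zero, ha₀]
    refine ⟨pointHom k G A a hatr, pointHom_equivariant k G A a hatr, ?_⟩
    -- both α ∘ θ and β send x_g to g • b; conclude by uniqueness
    have h1 : (α.comp (pointHom k G A a hatr)) = pointHom k G B b hbpt := by
      apply pointHom_unique
      intro g
      rw [AlgHom.comp_apply, pointHom_xg, hαe, hαa]
    have h2 : β = pointHom k G B b hbpt := by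
      apply pointHom_unique
      intro g
      rw [← hβe, Dk_smul_xg, mul_one]
    rw [h1, h2]
end

section
/- Let k be a field of characteristic p > 0 and G a nontrivial finite p-group. Then every object R ∈ 𝔗𝔰 is generated as a k-algebra by a finite set of points: there exist v_1,…,v_ℓ ∈ R with tr(v_i) = 1 for all i and R = k[v_1,…,v_ℓ]. -/
open scoped TensorProduct

set_option synthInstance.maxHeartbeats 1000000
set_option maxHeartbeats 1000000
set_option linter.unusedSectionVars false
set_option linter.unusedVariables false

universe u

/-- Let `k` be a field of characteristic `p > 0` and `G` a nontrivial
finite `p`-group.  Then every object `R ∈ 𝔗𝔰` is generated as a `k`-algebra by a finite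
set of points: there exist `v₁,…,v_ℓ ∈ R` with `tr(v_i) = 1` for all `i` and
`R = k[v₁,…,v_ℓ]`. -/
theorem TS_object_generated_by_points
    (k G : Type u) [Field k] [Group G] [Fintype G] [Nontrivial G]
    (p : ℕ) (hp : p.Prime) [CharP k p] (hG : IsPGroup p G)
    (R : Type u) [CommRing R] [Algebra k R] [MulSemiringAction G R] [SMulCommClass G k R]
    (hR : IsTS k G R) :
    ∃ (ℓ : ℕ) (v : Fin ℓ → R),
      (∀ i, (∑ g : G, g • v i) = 1) ∧
      Algebra.adjoin k (Set.range v) = ⊤ := by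
  haveI := Fact.mk hp
  obtain ⟨u, hu⟩ := hR.2 1 (fun g => smul_one g)
  obtain ⟨s, hs⟩ := hR.1.out
  -- traces are invariant
  have htr_inv : ∀ (x : R) (g : G), g • (∑ h : G, h • x) = ∑ h : G, h • x := by
    intro x g
    rw [Finset.smul_sum]
    exact Fintype.sum_equiv (Equiv.mulLeft g) _ _ (fun h => smul_smul g h x)
  -- |G| = 0 in R
  have hcard : ((Fintype.card G : R)) = 0 := by
    obtain ⟨n, hn⟩ := IsPGroup.iff_card.mp hG
    rw [Nat.card_eq_fintype_card] at hn
    have hn0 : n ≠ 0 := by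
      rintro rfl
      simp only [pow_zero] at hn
      exact (Fintype.one_lt_card (α := G)).ne' hn
    have hk : ((Fintype.card G : k)) = 0 := by
      rw [hn]
      push_cast
      rw [CharP.cast_eq_zero k p]
      exact zero_pow hn0
    calc ((Fintype.card G : R)) = algebraMap k R (Fintype.card G : k) := by
          rw [map_natCast]
      _ = 0 := by rw [hk, map_zero]
  -- trace of an invariant (in particular of a trace) is zero
  have htr_invsum : ∀ x : R, ∑ g : G, g • (∑ h : G, h • x) = 0 := by
    intro x
    have h1 : ∑ g : G, g • (∑ h : G, h • x) = (Fintype.card G) • (∑ h : G, h • x) := by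
      rw [Finset.sum_congr rfl (fun g _ => htr_inv x g), Finset.sum_const, Finset.card_univ]
    rw [h1, nsmul_eq_mul, hcard, zero_mul]
  -- trace of u * (trace of x) is trace of x
  have htr_u_mul : ∀ x : R, ∑ g : G, g • (u * (∑ h : G, h • x)) = ∑ h : G, h • x := by
    intro x
    have h1 : ∀ g : G, g • (u * (∑ h : G, h • x)) = (g • u) * (∑ h : G, h • x) := by
      intro g; rw [smul_mul', htr_inv]
    rw [Finset.sum_congr rfl (fun g _ => h1 g), ← Finset.sum_mul, hu, one_mul]
  -- the index type and family of points
  let ι := PUnit.{u + 1} ⊕ (↥s ⊕ ↥s)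
  let w : ι → R := fun j => match j with
    | Sum.inl _ => u
    | Sum.inr (Sum.inl x) => (x : R) - u * (∑ h : G, h • (x : R)) + u
    | Sum.inr (Sum.inr x) => (∑ h : G, h • (x : R)) + u
  have hw_tr : ∀ j : ι, ∑ g : G, g • w j = 1 := by
    rintro (⟨⟩ | x | x)
    · exact hu
    · show ∑ g : G, g • ((x : R) - u * (∑ h : G, h • (x : R)) + u) = 1
      simp only [smul_add, smul_sub, Finset.sum_add_distrib, Finset.sum_sub_distrib,
        htr_u_mul, hu]
      ring
    · show ∑ g : G, g • ((∑ h : G, h • (x : R)) + u) = 1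
      simp only [smul_add, Finset.sum_add_distrib, htr_invsum, hu]
      ring
  have hgen : Algebra.adjoin k (Set.range w) = ⊤ := by
    rw [eq_top_iff, ← hs]
    apply Algebra.adjoin_le
    intro x hx
    have hmem : ∀ j, w j ∈ Algebra.adjoin k (Set.range w) :=
      fun j => Algebra.subset_adjoin ⟨j, rfl⟩
    have huA := hmem (Sum.inl PUnit.unit)
    have haA := hmem (Sum.inr (Sum.inl ⟨x, hx⟩))
    have hbA := hmem (Sum.inr (Sum.inr ⟨x, hx⟩))
    have hxrepr : x = (w (Sum.inr (Sum.inl ⟨x, hx⟩)) - u)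
        + u * (w (Sum.inr (Sum.inr ⟨x, hx⟩)) - u) := by
      show x = ((x : R) - u * (∑ h : G, h • x) + u - u)
        + u * ((∑ h : G, h • x) + u - u)
      ring
    rw [hxrepr]
    exact add_mem (sub_mem haA huA) (mul_mem huA (sub_mem hbA huA))
  refine ⟨Fintype.card ι, fun i => w ((Fintype.equivFin ι).symm i), fun i => hw_tr _, ?_⟩
  have hrange : Set.range (fun i => w ((Fintype.equivFin ι).symm i)) = Set.range w :=
    Function.Surjective.range_comp (Fintype.equivFin ι).symm.surjective w
  rw [hrange, hgen]
end

section
/- Let k be a field of characteristic p > 0 and G a nontrivial finite p-group. Let Γ = k[T_1,…,T_N] ∈ 𝔗𝔰 be a polynomial ring with triangular G-action. Then Γ is erasable; explicitly, for every A ∈ 𝔗𝔰 and every point a ∈ A, the invariant elements λ_i := tr((a⊗1)·(1⊗T_i)) ∈ (A ⊗_k Γ)^G satisfy A ⊗_k Γ = (A⊗1)[λ_1,…,λ_N], i.e. the A-algebra homomorphism A[x_1,…,x_N] → A ⊗_k Γ sending x_i ↦ λ_i and a ↦ a⊗1 is an isomorphism. -/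
open scoped TensorProduct

set_option synthInstance.maxHeartbeats 1000000
set_option maxHeartbeats 1000000
set_option linter.unusedSectionVars false
set_option linter.unusedVariables false

universe u

section TensorAction

variable (k G : Type u) [Field k] [Group G] [Fintype G]
variable (A E : Type u) [CommRing A] [Algebra k A] [MulSemiringAction G A] [SMulCommClass G k A]
  [CommRing E] [Algebra k E] [MulSemiringAction G E] [SMulCommClass G k E]

/-- The diagonal `G`-action on a tensor product of two `k`-`G`-algebras. -/
noncomputable instance tensorMSA : MulSemiringAction G (A ⊗[k] E) where
  smul g := Algebra.TensorProduct.map (MulSemiringAction.toAlgHom k A (g : G))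
      (MulSemiringAction.toAlgHom k E (g : G))
  one_smul x := by
    have h1 : MulSemiringAction.toAlgHom k A (1 : G) = AlgHom.id k A :=
      AlgHom.ext fun a => one_smul G a
    have h2 : MulSemiringAction.toAlgHom k E (1 : G) = AlgHom.id k E :=
      AlgHom.ext fun a => one_smul G a
    show Algebra.TensorProduct.map _ _ x = x
    rw [h1, h2, Algebra.TensorProduct.map_id]
    rfl
  mul_smul g h x := by
    show Algebra.TensorProduct.map _ _ x =
      Algebra.TensorProduct.map _ _ (Algebra.TensorProduct.map _ _ x)
    induction x using TensorProduct.induction_on with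
    | zero => simp
    | tmul a e => simp [Algebra.TensorProduct.map_tmul, MulSemiringAction.toAlgHom_apply, mul_smul]
    | add x y hx hy => simp [map_add, hx, hy]
  smul_zero g := map_zero _
  smul_add g := map_add _
  smul_one g := map_one _
  smul_mul g := map_mul _

noncomputable instance tensorSCC : SMulCommClass G k (A ⊗[k] E) :=
  ⟨fun g c x => map_smul (Algebra.TensorProduct.map (MulSemiringAction.toAlgHom k A (g : G))
      (MulSemiringAction.toAlgHom k E (g : G))) c x⟩

lemma tensor_smul_tmul (g : G) (a : A) (e : E) :
    g • (a ⊗ₜ[k] e) = (g • a) ⊗ₜ[k] (g • e) := by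
  show Algebra.TensorProduct.map _ _ _ = _
  rw [Algebra.TensorProduct.map_tmul]
  rfl

end TensorAction

section Erasable

variable (k G : Type u) [Field k] [Group G] [Fintype G]

/-- A `k`-`G`-algebra `E` (of Krull dimension `N`) is erasable (with `N` erasing invariants):
for every `A ∈ 𝔗𝔰` there are invariants `λ₁, …, λ_N ∈ (A ⊗_k E)^G` such that the `A`-algebra
homomorphism `A[x₁,…,x_N] → A ⊗_k E`, `x_i ↦ λ_i`, `a ↦ a ⊗ 1`, is an isomorphism. -/
def IsErasableWith (E : Type u) [CommRing E] [Algebra k E] [MulSemiringAction G E]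
    [SMulCommClass G k E] (N : ℕ) : Prop :=
  ∀ (A : Type u) [CommRing A] [Algebra k A] [MulSemiringAction G A] [SMulCommClass G k A],
    IsTS k G A →
    ∃ lam : Fin N → (A ⊗[k] E),
      (∀ (i : Fin N) (g : G), g • lam i = lam i) ∧
      Function.Bijective ⇑(MvPolynomial.aeval (R := A) lam)

/-- `Γ ∈ 𝔗𝔰` (of Krull dimension `N`) is self-erasing: the erasability condition holds
for `A = Γ`, i.e. `Γ ⊗_k Γ = (Γ ⊗ 1)[μ₁,…,μ_N]` for suitable invariants
`μ_i ∈ (Γ ⊗_k Γ)^G`. -/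
def IsSelfErasing (Γ : Type u) [CommRing Γ] [Algebra k Γ] [MulSemiringAction G Γ]
    [SMulCommClass G k Γ] (N : ℕ) : Prop :=
  ∃ lam : Fin N → (Γ ⊗[k] Γ),
    (∀ (i : Fin N) (g : G), g • lam i = lam i) ∧
    Function.Bijective ⇑(MvPolynomial.aeval (R := Γ) lam)

end Erasable

section Triangular

variable (k G : Type u) [Field k] [Group G] [Fintype G]

/-- A polynomial ring `k[T₁,…,T_N]` with a `G`-action by `k`-algebra automorphisms is
triangular (w.r.t. the variables `T_i`) if `(T_i)g = T_i + f_{g,i}` for some polynomial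
`f_{g,i} ∈ k[T₁,…,T_{i−1}]`, for all `g ∈ G` and all `i`. -/
def IsTriangular (N : ℕ) [MulSemiringAction G (MvPolynomial (Fin N) k)] : Prop :=
  ∀ (g : G) (i : Fin N),
    g • (MvPolynomial.X i : MvPolynomial (Fin N) k) - MvPolynomial.X i ∈
      Algebra.adjoin k (MvPolynomial.X '' {j : Fin N | j < i})

end Triangular

section Aux1


/-- A surjective ring endomorphism of a Noetherian commutative ring is injective. -/
lemma aux_ringHom_injective {R : Type*} [CommRing R] [IsNoetherianRing R]
    (f : R →+* R) (hf : Function.Surjective f) : Function.Injective f := by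
  have hiter : ∀ n : ℕ, Function.Surjective ⇑(f ^ n) := by
    intro n
    rw [RingHom.coe_pow]
    exact Function.Surjective.iterate hf n
  have mono : Monotone fun n : ℕ => RingHom.ker (f ^ n) := by
    apply monotone_nat_of_le_succ
    intro n x hx
    have hx' : (f ^ n) x = 0 := hx
    show (f ^ (n + 1)) x = 0
    have : ⇑(f ^ (n + 1)) = f ∘ ⇑(f ^ n) := by
      rw [RingHom.coe_pow, RingHom.coe_pow, Function.iterate_succ']
    rw [show ((f ^ (n + 1)) x : R) = f ((f ^ n) x) from congrFun this x, hx', map_zero]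
  obtain ⟨n, hn⟩ := monotone_stabilizes_iff_noetherian.mpr (inferInstance : IsNoetherian R R) (⟨fun n => RingHom.ker (f ^ n), mono⟩ : ℕ →o Submodule R R)
  rw [injective_iff_map_eq_zero]
  intro x hx
  obtain ⟨y, hy⟩ := hiter n x
  have hy1 : y ∈ RingHom.ker (f ^ (n + 1)) := by
    show (f ^ (n + 1)) y = 0
    have : ⇑(f ^ (n + 1)) = f ∘ ⇑(f ^ n) := by
      rw [RingHom.coe_pow, RingHom.coe_pow, Function.iterate_succ']
    rw [show ((f ^ (n + 1)) y : R) = f ((f ^ n) y) from congrFun this y, hy, hx]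
  have hy2 : y ∈ RingHom.ker (f ^ n) := by
    have heq : RingHom.ker (f ^ n) = RingHom.ker (f ^ (n + 1)) := hn (n + 1) (Nat.le_succ n)
    rw [heq]
    exact hy1
  rw [← hy]
  exact hy2

lemma aux_map_mem_adjoin {k A : Type*} [CommSemiring k] [CommSemiring A] [Algebra k A]
    {σ : Type*} (s : Set σ) {f : MvPolynomial σ k}
    (hf : f ∈ Algebra.adjoin k (MvPolynomial.X '' s)) :
    MvPolynomial.map (algebraMap k A) f ∈ Algebra.adjoin A (MvPolynomial.X '' s) := by
  induction hf using Algebra.adjoin_induction with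
  | mem x hx =>
    obtain ⟨j, hj, rfl⟩ := hx
    rw [MvPolynomial.map_X]
    exact Algebra.subset_adjoin ⟨j, hj, rfl⟩
  | algebraMap r =>
    have : MvPolynomial.map (algebraMap k A) (algebraMap k (MvPolynomial σ k) r)
        = algebraMap A (MvPolynomial σ A) (algebraMap k A r) := by
      simp [MvPolynomial.algebraMap_eq]
    rw [this]
    exact Subalgebra.algebraMap_mem _ _
  | add x y hx hy ihx ihy => rw [map_add]; exact add_mem ihx ihy
  | mul x y hx hy ihx ihy => rw [map_mul]; exact mul_mem ihx ihy

lemma aux_triangular_bijective {A : Type*} [CommRing A] [IsNoetherianRing A] {N : ℕ}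
    (μ : Fin N → MvPolynomial (Fin N) A)
    (h : ∀ i, μ i - MvPolynomial.X i ∈
      Algebra.adjoin A (MvPolynomial.X '' {j : Fin N | j < i})) :
    Function.Bijective ⇑(MvPolynomial.aeval (R := A) μ) := by
  have key : ∀ n : ℕ, ∀ i : Fin N, (i : ℕ) < n →
      (MvPolynomial.X i : MvPolynomial (Fin N) A) ∈ Algebra.adjoin A (Set.range μ) := by
    intro n
    induction n with
    | zero => intro i hi; omega
    | succ n ih =>
      intro i hi
      have h1 : Algebra.adjoin A (MvPolynomial.X '' {j : Fin N | j < i})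
          ≤ Algebra.adjoin A (Set.range μ) := by
        rw [Algebra.adjoin_le_iff]
        rintro x ⟨j, hj, rfl⟩
        exact ih j (by have := (Fin.lt_def.mp hj); omega)
      have hXi : (MvPolynomial.X i : MvPolynomial (Fin N) A)
          = μ i - (μ i - MvPolynomial.X i) := by ring
      rw [hXi]
      exact sub_mem (Algebra.subset_adjoin ⟨i, rfl⟩) (h1 (h i))
  have hsurj : Function.Surjective ⇑(MvPolynomial.aeval (R := A) μ) := by
    rw [← AlgHom.range_eq_top, ← Algebra.adjoin_range_eq_range_aeval, eq_top_iff,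
      ← MvPolynomial.adjoin_range_X, Algebra.adjoin_le_iff]
    rintro x ⟨i, rfl⟩
    exact key N i i.isLt
  exact ⟨aux_ringHom_injective (MvPolynomial.aeval (R := A) μ).toRingHom hsurj, hsurj⟩

end Aux1

section AuxMain

variable (k G : Type u) [Field k] [Group G] [Fintype G]

lemma aux_main
    (N : ℕ) [MulSemiringAction G (MvPolynomial (Fin N) k)]
    [SMulCommClass G k (MvPolynomial (Fin N) k)]
    (htri : IsTriangular k G N)
    (A : Type u) [CommRing A] [Algebra k A] [MulSemiringAction G A] [SMulCommClass G k A]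
    (hA : IsTS k G A) (a : A) (ha : (∑ g : G, g • a) = 1) :
    let lam : Fin N → (A ⊗[k] MvPolynomial (Fin N) k) :=
      fun i => ∑ h : G, h • (a ⊗ₜ[k] (MvPolynomial.X i : MvPolynomial (Fin N) k))
    (∀ (i : Fin N) (g : G), g • lam i = lam i) ∧
    Function.Bijective ⇑(MvPolynomial.aeval (R := A) lam) := by
  intro lam
  constructor
  · -- invariance
    intro i g
    show g • ∑ h : G, h • (a ⊗ₜ[k] (MvPolynomial.X i : MvPolynomial (Fin N) k)) = _
    rw [Finset.smul_sum]
    exact Fintype.sum_equiv (Equiv.mulLeft g) _ _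
      (fun h => by rw [smul_smul]; rfl)
  · -- bijectivity
    haveI : IsNoetherianRing A := Algebra.FiniteType.isNoetherianRing k A (h := hA.1)
    set e := MvPolynomial.algebraTensorAlgEquiv (σ := Fin N) k A with he
    set μ : Fin N → MvPolynomial (Fin N) A := fun i => e (lam i) with hμdef
    have hμ : ∀ i, μ i - MvPolynomial.X i ∈
        Algebra.adjoin A (MvPolynomial.X '' {j : Fin N | j < i}) := by
      intro i
      have hterm : ∀ h : G, e (h • (a ⊗ₜ[k] (MvPolynomial.X i : MvPolynomial (Fin N) k)))
          = (h • a) • (MvPolynomial.X i : MvPolynomial (Fin N) A)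
            + (h • a) • MvPolynomial.map (algebraMap k A)
              ((h • MvPolynomial.X i : MvPolynomial (Fin N) k) - MvPolynomial.X i) := by
        intro h
        rw [tensor_smul_tmul, MvPolynomial.algebraTensorAlgEquiv_tmul, map_sub,
          MvPolynomial.map_X, smul_sub]
        abel
      have hval : μ i = MvPolynomial.X i
          + ∑ h : G, (h • a) • MvPolynomial.map (algebraMap k A)
            ((h • MvPolynomial.X i : MvPolynomial (Fin N) k) - MvPolynomial.X i) := by
        show e (∑ h : G, h • (a ⊗ₜ[k] (MvPolynomial.X i : MvPolynomial (Fin N) k))) = _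
        rw [map_sum, Finset.sum_congr rfl (fun h _ => hterm h), Finset.sum_add_distrib,
          ← Finset.sum_smul, ha, one_smul]
      rw [hval, add_sub_cancel_left]
      refine Subalgebra.sum_mem (Algebra.adjoin A (MvPolynomial.X '' {j : Fin N | j < i}))
        (fun h _ => ?_)
      refine Subalgebra.smul_mem (Algebra.adjoin A (MvPolynomial.X '' {j : Fin N | j < i}))
        ?_ (h • a)
      exact aux_map_mem_adjoin (k := k) (A := A) {j : Fin N | j < i} (htri h i)
    have hbijμ : Function.Bijective ⇑(MvPolynomial.aeval (R := A) μ) :=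
      aux_triangular_bijective μ hμ
    have hEx : ∀ x, e ((MvPolynomial.aeval (R := A) lam) x)
        = (MvPolynomial.aeval (R := A) μ) x := by
      intro x
      have h1 := MvPolynomial.comp_aeval_apply (f := lam) e.toAlgHom x
      simpa [hμdef] using h1
    have hfun : ⇑(MvPolynomial.aeval (R := A) lam)
        = ⇑e.symm ∘ ⇑(MvPolynomial.aeval (R := A) μ) := by
      funext x
      rw [Function.comp_apply, ← hEx x, AlgEquiv.symm_apply_apply]
    rw [hfun]
    exact Function.Bijective.comp e.symm.bijective hbijμ

end AuxMain

/-- triangular implies erasable.  Let `k` be a field of characteristic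
`p > 0`, `G` a nontrivial finite `p`-group and `Γ = k[T₁,…,T_N] ∈ 𝔗𝔰` a polynomial ring
with triangular `G`-action.  Then `Γ` is erasable; explicitly, for every `A ∈ 𝔗𝔰` and
every point `a ∈ A`, the invariant elements `λ_i := tr((a⊗1)·(1⊗T_i)) ∈ (A ⊗_k Γ)^G`
satisfy `A ⊗_k Γ = (A⊗1)[λ₁,…,λ_N]`, i.e. the `A`-algebra homomorphism
`A[x₁,…,x_N] → A ⊗_k Γ`, `x_i ↦ λ_i`, `a ↦ a⊗1`, is an isomorphism. -/
theorem triangular_polynomial_ring_is_erasable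
    (k G : Type u) [Field k] [Group G] [Fintype G] [Nontrivial G]
    (p : ℕ) (hp : p.Prime) [CharP k p] (hG : IsPGroup p G)
    (N : ℕ) [MulSemiringAction G (MvPolynomial (Fin N) k)]
    [SMulCommClass G k (MvPolynomial (Fin N) k)]
    (htri : IsTriangular k G N) (hts : IsTS k G (MvPolynomial (Fin N) k)) :
    IsErasableWith k G (MvPolynomial (Fin N) k) N ∧
    (∀ (A : Type u) [CommRing A] [Algebra k A] [MulSemiringAction G A] [SMulCommClass G k A],
      IsTS k G A → ∀ a : A, (∑ g : G, g • a) = 1 →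
      let lam : Fin N → (A ⊗[k] MvPolynomial (Fin N) k) :=
        fun i => ∑ h : G, h • (a ⊗ₜ[k] (MvPolynomial.X i : MvPolynomial (Fin N) k))
      (∀ (i : Fin N) (g : G), g • lam i = lam i) ∧
      Function.Bijective ⇑(MvPolynomial.aeval (R := A) lam)) := by
  constructor
  · intro A _ _ _ _ hA
    obtain ⟨a, ha⟩ := hA.2 1 (fun g => smul_one g)
    obtain ⟨hinv, hbij⟩ := aux_main k G N htri A hA a ha
    exact ⟨fun i => ∑ h : G, h • (a ⊗ₜ[k] (MvPolynomial.X i : MvPolynomial (Fin N) k)),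
      hinv, hbij⟩
  · intro A _ _ _ _ hA a ha
    exact aux_main k G N htri A hA a ha
end

section
/- Let k be a field of characteristic p > 0 and G a nontrivial finite p-group. Let E be an erasable k-G-algebra of Krull dimension e and let P ∈ 𝔗𝔰, with G acting diagonally on E ⊗_k P. Then: (1) (E ⊗ 1) ∩ (E ⊗_k P)^G = E^G ⊗ 1, and (E ⊗_k P)^G is isomorphic as a k-algebra to a polynomial ring in e variables over P^G; (2) if P^G is isomorphic to a polynomial ring in m variables over k, then (E ⊗_k P)^G is isomorphic to a polynomial ring in e + m variables over k. -/
open scoped TensorProduct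

set_option synthInstance.maxHeartbeats 1000000
set_option maxHeartbeats 1000000
set_option linter.unusedSectionVars false
set_option linter.unusedVariables false

universe u

/-- Let `k` be a field of characteristic `p > 0` and `G` a nontrivial
finite `p`-group.  Let `E` be an erasable `k`-`G`-algebra of Krull dimension `e` and let
`P ∈ 𝔗𝔰`, with `G` acting diagonally on `E ⊗_k P`.  Then:
(1) `(E ⊗ 1) ∩ (E ⊗_k P)^G = E^G ⊗ 1`, and `(E ⊗_k P)^G` is isomorphic as a `k`-algebra
to a polynomial ring in `e` variables over `P^G`;
(2) if `P^G` is isomorphic to a polynomial ring in `m` variables over `k`, then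
`(E ⊗_k P)^G` is isomorphic to a polynomial ring in `e + m` variables over `k`. -/
theorem erasable_invariants_of_tensor
    (k G : Type u) [Field k] [Group G] [Fintype G] [Nontrivial G]
    (p : ℕ) (hp : p.Prime) [CharP k p] (hG : IsPGroup p G)
    (E : Type u) [CommRing E] [Algebra k E] [MulSemiringAction G E] [SMulCommClass G k E]
    (e : ℕ) (he : ringKrullDim E = e) (hE : IsErasableWith k G E e)
    (P : Type u) [CommRing P] [Algebra k P] [MulSemiringAction G P] [SMulCommClass G k P]
    (hP : IsTS k G P) :
    ((Set.range ⇑(Algebra.TensorProduct.includeLeft (R := k) (S := k) (A := E) (B := P))) ∩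
        {x : E ⊗[k] P | ∀ g : G, g • x = x}
      = ⇑(Algebra.TensorProduct.includeLeft (R := k) (S := k) (A := E) (B := P)) ''
          {y : E | ∀ g : G, g • y = y}) ∧
    Nonempty (↥(invAlg k G (E ⊗[k] P)) ≃ₐ[k] MvPolynomial (Fin e) ↥(invAlg k G P)) ∧
    (∀ m : ℕ, Nonempty (↥(invAlg k G P) ≃ₐ[k] MvPolynomial (Fin m) k) →
      Nonempty (↥(invAlg k G (E ⊗[k] P)) ≃ₐ[k] MvPolynomial (Fin (e + m)) k)) := by
  
  classical
  -- Get the erasing invariants for A = P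
  obtain ⟨lam, hlam_inv, hlam_bij⟩ := hE P hP
  -- the P-algebra isomorphism MvPolynomial (Fin e) P ≃ P ⊗ E
  let Φ : MvPolynomial (Fin e) P ≃ₐ[P] P ⊗[k] E :=
    AlgEquiv.ofBijective (MvPolynomial.aeval (R := P) lam) hlam_bij
  let Ψ : MvPolynomial (Fin e) P ≃ₐ[k] E ⊗[k] P :=
    (Φ.restrictScalars k).trans (Algebra.TensorProduct.comm k P E)
  -- coefficientwise action of g
  let gmap : G → (P →+* P) := fun g => (MulSemiringAction.toAlgHom k P g).toRingHom
  -- comm is equivariant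
  have hcomm : ∀ (g : G) (x : P ⊗[k] E),
      (Algebra.TensorProduct.comm k P E) (g • x) = g • (Algebra.TensorProduct.comm k P E x) := by
    intro g x
    induction x using TensorProduct.induction_on with
    | zero => simp
    | tmul a b =>
      rw [tensor_smul_tmul, Algebra.TensorProduct.comm_tmul, Algebra.TensorProduct.comm_tmul,
        tensor_smul_tmul]
    | add x y hx hy => rw [smul_add, map_add, map_add, smul_add, hx, hy]
  -- key equivariance of aeval lam
  have haeval : ∀ (g : G) (f : MvPolynomial (Fin e) P),
      g • (MvPolynomial.aeval (R := P) lam f) =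
        MvPolynomial.aeval (R := P) lam (MvPolynomial.map (gmap g) f) := by
    intro g f
    have : ((MulSemiringAction.toAlgHom k (P ⊗[k] E) g).toRingHom.comp
        (MvPolynomial.aeval (R := P) lam).toRingHom : MvPolynomial (Fin e) P →+* P ⊗[k] E) =
        (MvPolynomial.aeval (R := P) lam).toRingHom.comp (MvPolynomial.map (gmap g)) := by
      apply MvPolynomial.ringHom_ext
      · intro c
        simp only [RingHom.comp_apply, MvPolynomial.map_C]
        show g • ((MvPolynomial.aeval (R := P) lam) (MvPolynomial.C c)) =
          (MvPolynomial.aeval (R := P) lam) (MvPolynomial.C (g • c))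
        rw [MvPolynomial.aeval_C, MvPolynomial.aeval_C]
        simp only [Algebra.TensorProduct.algebraMap_apply, Algebra.algebraMap_self_apply]
        rw [tensor_smul_tmul, smul_one]
      · intro i
        simp only [RingHom.comp_apply, MvPolynomial.map_X]
        show g • ((MvPolynomial.aeval (R := P) lam) (MvPolynomial.X i)) =
          (MvPolynomial.aeval (R := P) lam) (MvPolynomial.X i)
        rw [MvPolynomial.aeval_X]
        exact hlam_inv i g
    exact RingHom.congr_fun this f
  have hPsi : ∀ (g : G) (f : MvPolynomial (Fin e) P),
      g • (Ψ f) = Ψ (MvPolynomial.map (gmap g) f) := by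
    intro g f
    show g • ((Algebra.TensorProduct.comm k P E) ((MvPolynomial.aeval (R := P) lam) f)) = _
    rw [← hcomm, haeval]
    rfl
  -- coefficient criterion for invariance of Ψ f
  have hcrit : ∀ f : MvPolynomial (Fin e) P,
      (∀ g : G, g • (Ψ f) = Ψ f) ↔ ∀ m, MvPolynomial.coeff m f ∈ invAlg k G P := by
    intro f
    constructor
    · intro h m g
      have := h g
      rw [hPsi] at this
      have hf : MvPolynomial.map (gmap g) f = f := Ψ.injective this
      have := congrArg (MvPolynomial.coeff m) hf
      rwa [MvPolynomial.coeff_map] at this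
    · intro h g
      rw [hPsi]
      congr 1
      ext m
      rw [MvPolynomial.coeff_map]
      exact h m g
  -- the algebra hom from MvPolynomial over the invariants
  let θ : MvPolynomial (Fin e) ↥(invAlg k G P) →ₐ[k] E ⊗[k] P :=
    Ψ.toAlgHom.comp (MvPolynomial.mapAlgHom (invAlg k G P).val)
  have hθ : ∀ q, θ q = Ψ (MvPolynomial.map ((invAlg k G P).val.toRingHom) q) := fun q => rfl
  have hrange : ∀ q, θ q ∈ invAlg k G (E ⊗[k] P) := by
    intro q g
    rw [hθ]
    have : ∀ m, MvPolynomial.coeff m (MvPolynomial.map ((invAlg k G P).val.toRingHom) q)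
        ∈ invAlg k G P := by
      intro m
      rw [MvPolynomial.coeff_map]
      exact (MvPolynomial.coeff m q).2
    exact (hcrit _).2 this g
  let θ' : MvPolynomial (Fin e) ↥(invAlg k G P) →ₐ[k] ↥(invAlg k G (E ⊗[k] P)) :=
    θ.codRestrict (invAlg k G (E ⊗[k] P)) hrange
  have hval_inj : Function.Injective ((invAlg k G P).val.toRingHom) := Subtype.val_injective
  have hθ'_inj : Function.Injective θ' := by
    intro a b hab
    have : θ a = θ b := congrArg Subtype.val hab
    rw [hθ, hθ] at this
    exact MvPolynomial.map_injective _ hval_inj (Ψ.injective this)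
  have hθ'_surj : Function.Surjective θ' := by
    rintro ⟨x, hx⟩
    obtain ⟨f, hf⟩ : ∃ f, Ψ f = x := ⟨Ψ.symm x, Ψ.apply_symm_apply x⟩
    have hcoeffs : ∀ m, MvPolynomial.coeff m f ∈ invAlg k G P := by
      apply (hcrit f).1
      intro g
      rw [hf]
      exact hx g
    refine ⟨f.support.sum (fun m => MvPolynomial.monomial m
      (⟨MvPolynomial.coeff m f, hcoeffs m⟩ : ↥(invAlg k G P))), ?_⟩
    apply Subtype.ext
    show θ _ = x
    rw [hθ, ← hf]
    congr 1
    rw [map_sum]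
    have : ∀ m ∈ f.support, MvPolynomial.map ((invAlg k G P).val.toRingHom)
        (MvPolynomial.monomial m (⟨MvPolynomial.coeff m f, hcoeffs m⟩ : ↥(invAlg k G P)))
        = MvPolynomial.monomial m (MvPolynomial.coeff m f) := by
      intro m _
      rw [MvPolynomial.map_monomial]
      rfl
    rw [Finset.sum_congr rfl this]
    exact f.support_sum_monomial_coeff
  have eqv : Nonempty (↥(invAlg k G (E ⊗[k] P)) ≃ₐ[k] MvPolynomial (Fin e) ↥(invAlg k G P)) :=
    ⟨(AlgEquiv.ofBijective θ' ⟨hθ'_inj, hθ'_surj⟩).symm⟩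
  refine ⟨?_, eqv, ?_⟩
  · -- the set equality
    ext x
    constructor
    · rintro ⟨⟨y, rfl⟩, hx⟩
      rcases subsingleton_or_nontrivial P with hs | hn
      · refine ⟨0, fun g => smul_zero g, ?_⟩
        have h1 : (1 : P) = 0 := Subsingleton.elim _ _
        show (0 : E) ⊗ₜ[k] (1 : P) = y ⊗ₜ[k] (1 : P)
        rw [h1, TensorProduct.tmul_zero, TensorProduct.tmul_zero]
      · -- includeLeft is injective
        have hinj : Function.Injective (fun z : E => z ⊗ₜ[k] (1 : P)) := by
          have hmap : Function.Injective (Algebra.linearMap k P) :=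
            (algebraMap k P).injective
          have hL : Function.Injective (LinearMap.lTensor E (Algebra.linearMap k P)) :=
            Module.Flat.lTensor_preserves_injective_linearMap _ hmap
          intro a b hab
          have ha : (LinearMap.lTensor E (Algebra.linearMap k P)) (a ⊗ₜ[k] (1 : k))
              = a ⊗ₜ[k] (1 : P) := by
            simp [LinearMap.lTensor_tmul]
          have hb : (LinearMap.lTensor E (Algebra.linearMap k P)) (b ⊗ₜ[k] (1 : k))
              = b ⊗ₜ[k] (1 : P) := by
            simp [LinearMap.lTensor_tmul]
          have h2 : a ⊗ₜ[k] (1 : k) = b ⊗ₜ[k] (1 : k) := hL (by rw [ha, hb]; exact hab)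
          have := congrArg (TensorProduct.rid k E) h2
          simpa using this
        refine ⟨y, ?_, rfl⟩
        intro g
        have := hx g
        have h2 : (g • y) ⊗ₜ[k] (1 : P) = y ⊗ₜ[k] (1 : P) := by
          have h4 : g • (y ⊗ₜ[k] (1 : P)) = (g • y) ⊗ₜ[k] (g • (1 : P)) :=
            tensor_smul_tmul k G E P g y 1
          rw [smul_one] at h4
          rw [← h4]
          exact this
        exact hinj h2
    · rintro ⟨y, hy, rfl⟩
      refine ⟨⟨y, rfl⟩, ?_⟩
      intro g
      show g • (y ⊗ₜ[k] (1 : P)) = y ⊗ₜ[k] (1 : P)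
      rw [tensor_smul_tmul, hy g, smul_one]
  · -- part (2)
    rintro m ⟨ι⟩
    obtain ⟨eq1⟩ := eqv
    exact ⟨eq1.trans ((MvPolynomial.mapAlgEquiv (Fin e) ι).trans
      (((MvPolynomial.sumAlgEquiv k (Fin e) (Fin m)).symm).trans
        (MvPolynomial.renameEquiv k finSumFinEquiv)))⟩
end

section
/- Let k be a field of characteristic p > 0 and G a nontrivial finite p-group. Let E be an erasable k-G-algebra of finite Krull dimension and let P ∈ 𝔗𝔰 be s-projective. Then E ⊗_k P (with diagonal G-action) belongs to 𝔗𝔰 and is s-projective. -/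
open scoped TensorProduct

set_option synthInstance.maxHeartbeats 1000000
set_option maxHeartbeats 1000000
set_option linter.unusedSectionVars false
set_option linter.unusedVariables false

universe u

/-- Let `k` be a field of characteristic `p > 0` and `G` a nontrivial
finite `p`-group.  Let `E` be an erasable `k`-`G`-algebra of finite Krull dimension and
let `P ∈ 𝔗𝔰` be s-projective.  Then `E ⊗_k P` (with the diagonal `G`-action) belongs to
`𝔗𝔰` and is s-projective. -/
theorem erasable_tensor_s_projective_is_s_projective
    (k G : Type u) [Field k] [Group G] [Fintype G] [Nontrivial G]
    (p : ℕ) (hp : p.Prime) [CharP k p] (hG : IsPGroup p G)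
    (E : Type u) [CommRing E] [Algebra k E] [MulSemiringAction G E] [SMulCommClass G k E]
    (e : ℕ) (he : ringKrullDim E = e) (hE : IsErasableWith k G E e)
    (P : Type u) [CommRing P] [Algebra k P] [MulSemiringAction G P] [SMulCommClass G k P]
    (hP : IsTS k G P) (hproj : IsSProjective k G P) :
    IsTS k G (E ⊗[k] P) ∧ IsSProjective k G (E ⊗[k] P) := by
  classical
  obtain ⟨lam, hlaminv, hbij⟩ := hE P hP
  -- the commutation isomorphism is equivariant
  have hcomm_eq : IsEquivariant G ⇑(Algebra.TensorProduct.comm k P E) := by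
    intro g x
    induction x using TensorProduct.induction_on with
    | zero => simp
    | tmul a b =>
        rw [tensor_smul_tmul, Algebra.TensorProduct.comm_tmul,
          Algebra.TensorProduct.comm_tmul, tensor_smul_tmul]
    | add x y hx hy => rw [smul_add, map_add, map_add, smul_add, hx, hy]
  set F : MvPolynomial (Fin e) P →ₐ[k] E ⊗[k] P :=
    ((Algebra.TensorProduct.comm k P E).toAlgHom.comp
      ((MvPolynomial.aeval (R := P) lam).restrictScalars k)) with hFdef
  have hFapp : ∀ q, F q = Algebra.TensorProduct.comm k P E (MvPolynomial.aeval (R := P) lam q) :=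
    fun q => rfl
  have hFsurj : Function.Surjective ⇑F := by
    intro x
    obtain ⟨q, hq⟩ := hbij.2 ((Algebra.TensorProduct.comm k P E).symm x)
    exact ⟨q, by rw [hFapp, hq, AlgEquiv.apply_symm_apply]⟩
  have hFinj : Function.Injective ⇑F := by
    intro x y hxy
    apply hbij.1
    apply (Algebra.TensorProduct.comm k P E).injective
    exact hxy
  set μ : Fin e → E ⊗[k] P := fun i => Algebra.TensorProduct.comm k P E (lam i) with hμdef
  have hμinv : ∀ (i : Fin e) (g : G), g • μ i = μ i := by
    intro i g
    rw [hμdef]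
    simp only
    rw [← hcomm_eq g (lam i), hlaminv i g]
  have hF_C : ∀ q : P, F (MvPolynomial.C q) = (1 : E) ⊗ₜ[k] q := by
    intro q
    rw [hFapp, MvPolynomial.aeval_C]
    rw [Algebra.TensorProduct.algebraMap_apply]
    simp [Algebra.TensorProduct.comm_tmul]
  have hF_X : ∀ i, F (MvPolynomial.X i) = μ i := by
    intro i
    rw [hFapp, MvPolynomial.aeval_X, hμdef]
  set s : Set (E ⊗[k] P) := Set.range (fun q : P => (1 : E) ⊗ₜ[k] q) ∪ Set.range μ with hsdef
  have hgen : ∀ q : MvPolynomial (Fin e) P, F q ∈ Algebra.adjoin k s := by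
    intro q
    induction q using MvPolynomial.induction_on with
    | C q => rw [hF_C]; exact Algebra.subset_adjoin (Or.inl ⟨q, rfl⟩)
    | add q r hq hr => rw [map_add]; exact add_mem hq hr
    | mul_X q i hq =>
        rw [map_mul, hF_X]
        exact mul_mem hq (Algebra.subset_adjoin (Or.inr ⟨i, rfl⟩))
  have hadj : Algebra.adjoin k s = ⊤ := by
    rw [eq_top_iff]
    intro x _
    obtain ⟨q, rfl⟩ := hFsurj x
    exact hgen q
  have hTS : IsTS k G (E ⊗[k] P) := by
    constructor
    · have h1 : Algebra.FiniteType k (MvPolynomial (Fin e) P) :=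
        Algebra.FiniteType.trans hP.1 inferInstance
      exact (haveI := h1; Algebra.FiniteType.of_surjective F hFsurj)
    · intro b hb
      obtain ⟨a, ha⟩ := hP.2 1 (fun g => smul_one g)
      refine ⟨b * ((1 : E) ⊗ₜ[k] a), ?_⟩
      have key : ∀ g : G, g • (b * ((1 : E) ⊗ₜ[k] a)) = b * ((1 : E) ⊗ₜ[k] (g • a)) := by
        intro g
        rw [smul_mul', hb g, tensor_smul_tmul, smul_one]
      simp_rw [key]
      rw [← Finset.mul_sum, ← TensorProduct.tmul_sum, ha, ← Algebra.TensorProduct.one_def,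
        mul_one]
  refine ⟨hTS, ?_⟩
  intro A B _ _ _ _ _ _ _ _ hA hB α hαeq hαsurj β hβeq
  -- the inclusion P → E ⊗ P
  set ι : P →ₐ[k] E ⊗[k] P := Algebra.TensorProduct.includeRight with hιdef
  have hιapp : ∀ q : P, ι q = (1 : E) ⊗ₜ[k] q := fun q => rfl
  have hιeq : IsEquivariant G ⇑ι := by
    intro g q
    rw [hιapp, hιapp, tensor_smul_tmul, smul_one]
  have hβP : IsEquivariant G ⇑(β.comp ι) := by
    intro g q
    simp only [AlgHom.coe_comp, Function.comp_apply]
    rw [hιeq g q, hβeq]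
  obtain ⟨θP, hθPeq, hθPcomp⟩ := hproj A B hA hB α hαeq hαsurj (β.comp ι) hβP
  -- invariant preimages of β (μ i)
  have hbinv : ∀ (i : Fin e) (g : G), g • β (μ i) = β (μ i) := by
    intro i g
    rw [← hβeq, hμinv]
  have hex : ∀ i : Fin e, ∃ a : A, (∀ g : G, g • a = a) ∧ α a = β (μ i) := by
    intro i
    obtain ⟨d, hd⟩ := hB.2 (β (μ i)) (hbinv i)
    obtain ⟨c, hc⟩ := hαsurj d
    refine ⟨∑ g : G, g • c, ?_, ?_⟩
    · intro g
      rw [Finset.smul_sum]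
      simp_rw [smul_smul]
      exact Fintype.sum_equiv (Equiv.mulLeft g) _ _ (fun h => rfl)
    · rw [map_sum]
      have hgc : ∀ g : G, α (g • c) = g • d := fun g => by rw [hαeq, hc]
      simp_rw [hgc]
      exact hd
  choose av havinv havα using hex
  set φ : MvPolynomial (Fin e) P ≃ₐ[k] E ⊗[k] P := AlgEquiv.ofBijective F ⟨hFinj, hFsurj⟩
    with hφdef
  have hφapp : ∀ q, φ q = F q := fun q => rfl
  set θ : E ⊗[k] P →ₐ[k] A :=
    (MvPolynomial.aevalTower θP av).comp (φ.symm : E ⊗[k] P ≃ₐ[k] _).toAlgHom with hθdef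
  have hθF : ∀ q, θ (F q) = MvPolynomial.aevalTower θP av q := by
    intro q
    have h1 : φ.symm (F q) = q := by
      apply φ.injective
      rw [AlgEquiv.apply_symm_apply, hφapp]
    show MvPolynomial.aevalTower θP av (φ.symm (F q)) = _
    rw [h1]
  have hθι : ∀ q : P, θ ((1 : E) ⊗ₜ[k] q) = θP q := by
    intro q
    rw [← hF_C, hθF, MvPolynomial.aevalTower_C]
  have hθμ : ∀ i, θ (μ i) = av i := by
    intro i
    rw [← hF_X, hθF, MvPolynomial.aevalTower_X]
  have hθeq : IsEquivariant G ⇑θ := by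
    intro g x
    have hx : x ∈ Algebra.adjoin k s := hadj ▸ Algebra.mem_top
    induction hx using Algebra.adjoin_induction with
    | mem y hy =>
        rcases hy with ⟨q, rfl⟩ | ⟨i, rfl⟩
        · simp only
          rw [tensor_smul_tmul, smul_one, hθι, hθι, hθPeq]
        · rw [hμinv, hθμ, havinv]
    | algebraMap r =>
        rw [smul_algebraMap, AlgHom.commutes, smul_algebraMap]
    | add y z hy hz hy' hz' =>
        rw [smul_add, map_add, map_add, smul_add, hy', hz']
    | mul y z hy hz hy' hz' =>
        rw [smul_mul', map_mul, map_mul, smul_mul', hy', hz']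
  have hcomp : ∀ x ∈ Algebra.adjoin k s, α (θ x) = β x := by
    intro x hx
    induction hx using Algebra.adjoin_induction with
    | mem y hy =>
        rcases hy with ⟨q, rfl⟩ | ⟨i, rfl⟩
        · simp only
          rw [hθι]
          have := congrArg (fun f : P →ₐ[k] B => f q) hθPcomp
          simpa [hιapp] using this
        · rw [hθμ, havα]
    | algebraMap r => rw [AlgHom.commutes, AlgHom.commutes, AlgHom.commutes]
    | add y z hy hz hy' hz' => rw [map_add, map_add, map_add, hy', hz']
    | mul y z hy hz hy' hz' => rw [map_mul, map_mul, map_mul, hy', hz']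
  exact ⟨θ, hθeq, AlgHom.ext fun x => hcomp x (hadj ▸ Algebra.mem_top)⟩
end

section
/- Let k be a field of characteristic p > 0, G a nontrivial finite p-group, and θ ∈ 𝔗𝔰(R, S) a morphism. Then: (a) θ is surjective if and only if for every point s ∈ S there is a point r ∈ R with θ(r) = s; (b) θ is injective if and only if the restriction of θ to the set of points of R is an injective map into the points of S; (c) θ is a monomorphism in 𝔗𝔰 (i.e. for all X ∈ 𝔗𝔰 and all morphisms φ₁, φ₂ ∈ 𝔗𝔰(X, R), θ∘φ₁ = θ∘φ₂ implies φ₁ = φ₂) if and only if θ is injective. -/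
open scoped TensorProduct

set_option synthInstance.maxHeartbeats 1000000
set_option maxHeartbeats 1000000
set_option linter.unusedSectionVars false
set_option linter.unusedVariables false

universe u

section Helpers

variable {G : Type u} [Group G] [Fintype G]

/-- The trace of any element is `G`-invariant. -/
lemma trace_invariant {R : Type u} [CommRing R] [MulSemiringAction G R] (h : G) (r : R) :
    h • (∑ g : G, g • r) = ∑ g : G, g • r := by
  rw [Finset.smul_sum]
  exact Fintype.sum_equiv (Equiv.mulLeft h) _ _ (fun g => (smul_smul h g r))

lemma trace_mul_invariant {R : Type u} [CommRing R] [MulSemiringAction G R]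
    (c r : R) (hc : ∀ g : G, g • c = c) :
    (∑ g : G, g • (c * r)) = c * ∑ g : G, g • r := by
  rw [Finset.mul_sum]
  exact Finset.sum_congr rfl fun g _ => by rw [smul_mul', hc g]

lemma map_trace {R S : Type u} [CommRing R] [MulSemiringAction G R]
    [CommRing S] [MulSemiringAction G S] {k : Type u} [Field k] [Algebra k R] [Algebra k S]
    (θ : R →ₐ[k] S) (hθ : IsEquivariant G ⇑θ) (r : R) :
    θ (∑ g : G, g • r) = ∑ g : G, g • θ r := by
  rw [map_sum]
  exact Finset.sum_congr rfl fun g _ => hθ g r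

end Helpers

section CardZero

variable {k G : Type u} [Field k] [Group G] [Fintype G] [Nontrivial G]

lemma card_eq_zero_in_alg (p : ℕ) (hp : p.Prime) [CharP k p] (hG : IsPGroup p G)
    (R : Type u) [CommRing R] [Algebra k R] : (Fintype.card G : R) = 0 := by
  haveI : Fact p.Prime := ⟨hp⟩
  obtain ⟨n, hn⟩ := IsPGroup.iff_card.mp hG
  rw [Nat.card_eq_fintype_card] at hn
  have hn1 : n ≠ 0 := by
    rintro rfl
    simp at hn
    have := Fintype.one_lt_card (α := G)
    omega
  have hpR : (p : R) = 0 := by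
    rw [← map_natCast (algebraMap k R) p, CharP.cast_eq_zero k p, map_zero]
  rw [hn]
  push_cast
  rw [hpR, zero_pow hn1]

lemma trace_one_eq_zero (p : ℕ) (hp : p.Prime) [CharP k p] (hG : IsPGroup p G)
    (R : Type u) [CommRing R] [Algebra k R] [MulSemiringAction G R] :
    (∑ g : G, g • (1 : R)) = 0 := by
  have : (∑ g : G, g • (1 : R)) = ∑ _g : G, (1 : R) :=
    Finset.sum_congr rfl fun g _ => smul_one g
  rw [this, Finset.sum_const, nsmul_eq_mul, mul_one, Finset.card_univ,
    card_eq_zero_in_alg (k := k) p hp hG R]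

end CardZero

section Dress

variable (k G : Type u) [Field k] [Group G] [Fintype G]

open MvPolynomial

noncomputable instance mvDressAction : MulSemiringAction G (MvPolynomial G k) where
  smul g p := rename (fun h => g * h) p
  one_smul p := by
    show rename (fun h => (1:G) * h) p = p
    have : (fun h : G => (1:G) * h) = id := funext fun h => one_mul h
    rw [this, rename_id, AlgHom.id_apply]
  mul_smul g₁ g₂ p := by
    show rename _ p = rename _ (rename _ p)
    rw [rename_rename]
    have : ((fun h : G => g₁ * h) ∘ fun h : G => g₂ * h) = fun h : G => (g₁ * g₂) * h :=
      funext fun h => (mul_assoc g₁ g₂ h).symm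
    rw [this]
  smul_zero g := map_zero _
  smul_add g := map_add _
  smul_one g := map_one _
  smul_mul g := map_mul _

lemma dress_smul_def (g : G) (p : MvPolynomial G k) :
    g • p = rename (fun h => g * h) p := rfl

lemma dress_smul_X (g h : G) : g • (X h : MvPolynomial G k) = X (g * h) := by
  rw [dress_smul_def, rename_X]

instance : SMulCommClass G k (MvPolynomial G k) :=
  ⟨fun g c p => by
    rw [dress_smul_def, dress_smul_def]
    exact map_smul (rename (fun h : G => g * h)).toLinearMap c p⟩

/-- The generator of the Dress relation ideal. -/
noncomputable def dressRel : MvPolynomial G k := (∑ g : G, X g) - 1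

lemma dress_smul_rel (g : G) : g • dressRel k G = dressRel k G := by
  unfold dressRel
  rw [smul_sub, smul_one, Finset.smul_sum]
  congr 1
  refine Fintype.sum_equiv (Equiv.mulLeft g) _ _ (fun h => ?_)
  rw [dress_smul_X]
  rfl

/-- The ideal of the Dress relation. -/
noncomputable def dressIdeal : Ideal (MvPolynomial G k) := Ideal.span {dressRel k G}

lemma dress_smul_mem {a : MvPolynomial G k} (g : G) (ha : a ∈ dressIdeal k G) :
    g • a ∈ dressIdeal k G := by
  obtain ⟨b, rfl⟩ := Ideal.mem_span_singleton.mp ha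
  exact Ideal.mem_span_singleton.mpr ⟨g • b, by rw [smul_mul', dress_smul_rel]⟩

/-- The Dress algebra: the universal algebra with a point. -/
abbrev DressAlg : Type u := MvPolynomial G k ⧸ dressIdeal k G

/-- The action of `g` on the Dress algebra, as an algebra hom. -/
noncomputable def dressActHom (g : G) : DressAlg k G →ₐ[k] DressAlg k G :=
  Ideal.Quotient.liftₐ (dressIdeal k G)
    ((Ideal.Quotient.mkₐ k (dressIdeal k G)).comp (MulSemiringAction.toAlgHom k _ g))
    (fun a ha => by
      simp only [AlgHom.comp_apply, MulSemiringAction.toAlgHom_apply,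
        Ideal.Quotient.mkₐ_eq_mk, Ideal.Quotient.eq_zero_iff_mem]
      exact dress_smul_mem k G g ha)

lemma dressActHom_mk (g : G) (a : MvPolynomial G k) :
    dressActHom k G g (Ideal.Quotient.mk (dressIdeal k G) a)
      = Ideal.Quotient.mk (dressIdeal k G) (g • a) := rfl

noncomputable instance dressAction : MulSemiringAction G (DressAlg k G) where
  smul g q := dressActHom k G g q
  one_smul q := by
    obtain ⟨a, rfl⟩ := Ideal.Quotient.mk_surjective (I := dressIdeal k G) q
    show dressActHom k G 1 _ = _
    rw [dressActHom_mk, one_smul]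
  mul_smul g₁ g₂ q := by
    obtain ⟨a, rfl⟩ := Ideal.Quotient.mk_surjective (I := dressIdeal k G) q
    show dressActHom k G (g₁ * g₂) _ = dressActHom k G g₁ (dressActHom k G g₂ _)
    rw [dressActHom_mk, dressActHom_mk, dressActHom_mk, mul_smul]
  smul_zero g := map_zero (dressActHom k G g)
  smul_add g := map_add (dressActHom k G g)
  smul_one g := map_one (dressActHom k G g)
  smul_mul g := map_mul (dressActHom k G g)

lemma dress_q_smul_mk (g : G) (a : MvPolynomial G k) :
    g • (Ideal.Quotient.mk (dressIdeal k G) a) = Ideal.Quotient.mk (dressIdeal k G) (g • a) := rfl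

instance : SMulCommClass G k (DressAlg k G) :=
  ⟨fun g c q => by
    obtain ⟨a, rfl⟩ := Ideal.Quotient.mk_surjective (I := dressIdeal k G) q
    show dressActHom k G g (c • _) = c • dressActHom k G g _
    rw [map_smul]⟩

/-- The canonical point of the Dress algebra. -/
noncomputable def dressPt : DressAlg k G := Ideal.Quotient.mk (dressIdeal k G) (X 1)

lemma dress_trace_pt : (∑ g : G, g • dressPt k G) = 1 := by
  unfold dressPt
  have : (∑ g : G, g • Ideal.Quotient.mk (dressIdeal k G) (X 1))
      = Ideal.Quotient.mk (dressIdeal k G) (∑ g : G, X g) := by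
    rw [map_sum]
    exact Finset.sum_congr rfl fun g _ => by
      rw [dress_q_smul_mk, dress_smul_X, mul_one]
  have h0 : Ideal.Quotient.mk (dressIdeal k G) (dressRel k G) = 0 :=
    Ideal.Quotient.eq_zero_iff_mem.mpr (Ideal.subset_span rfl)
  rw [this, show (∑ g : G, X g : MvPolynomial G k) = dressRel k G + 1 by
    unfold dressRel; ring]
  rw [map_add, map_one, h0, zero_add]

lemma dress_isTS : IsTS k G (DressAlg k G) := by
  constructor
  · exact Algebra.FiniteType.of_surjective
      (Ideal.Quotient.mkₐ k (dressIdeal k G)) (Ideal.Quotient.mkₐ_surjective k _)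
  · intro b hb
    refine ⟨b * dressPt k G, ?_⟩
    rw [trace_mul_invariant b _ hb, dress_trace_pt, mul_one]

variable {R : Type u} [CommRing R] [Algebra k R] [MulSemiringAction G R] [SMulCommClass G k R]

/-- The morphism from the Dress algebra classified by a point `r` of `R`. -/
noncomputable def dressHom (r : R) (hr : (∑ g : G, g • r) = 1) : DressAlg k G →ₐ[k] R :=
  Ideal.Quotient.liftₐ (dressIdeal k G) (aeval (fun h : G => h • r))
    (by
      intro a ha
      obtain ⟨b, rfl⟩ := Ideal.mem_span_singleton.mp ha
      rw [map_mul]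
      have : aeval (fun h : G => h • r) (dressRel k G) = 0 := by
        unfold dressRel
        rw [map_sub, map_one, map_sum]
        simp only [aeval_X]
        rw [hr, sub_self]
      rw [this, zero_mul])

lemma dressHom_mk (r : R) (hr : (∑ g : G, g • r) = 1) (a : MvPolynomial G k) :
    dressHom k G r hr (Ideal.Quotient.mk (dressIdeal k G) a) = aeval (fun h : G => h • r) a :=
  rfl

lemma dressHom_equivariant (r : R) (hr : (∑ g : G, g • r) = 1) :
    IsEquivariant G ⇑(dressHom k G r hr) := by
  intro g q
  obtain ⟨a, rfl⟩ := Ideal.Quotient.mk_surjective (I := dressIdeal k G) q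
  rw [dress_q_smul_mk, dressHom_mk, dressHom_mk]
  have : (aeval (fun h : G => h • r)).comp
        ((MulSemiringAction.toAlgHom k (MvPolynomial G k) g))
      = (MulSemiringAction.toAlgHom k R g).comp (aeval (fun h : G => h • r)) := by
    apply algHom_ext
    intro h
    simp only [AlgHom.comp_apply, MulSemiringAction.toAlgHom_apply, aeval_X]
    rw [dress_smul_X, aeval_X, mul_smul]
  exact DFunLike.congr_fun this a

lemma dressHom_pt (r : R) (hr : (∑ g : G, g • r) = 1) :
    dressHom k G r hr (dressPt k G) = r := by
  unfold dressPt
  rw [dressHom_mk, aeval_X, one_smul]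

end Dress


/-- morphisms of `𝔗𝔰` and points.  Let `θ ∈ 𝔗𝔰(R, S)`.  Then:
(a) `θ` is surjective iff every point of `S` is the image of a point of `R`;
(b) `θ` is injective iff its restriction to the set of points of `R` is an injective map
(into the points of `S`);
(c) `θ` is a monomorphism in `𝔗𝔰` iff `θ` is injective. -/
theorem morphism_surjective_injective_mono_via_points
    (k G : Type u) [Field k] [Group G] [Fintype G] [Nontrivial G]
    (p : ℕ) (hp : p.Prime) [CharP k p] (hG : IsPGroup p G)
    (R S : Type u) [CommRing R] [Algebra k R] [MulSemiringAction G R] [SMulCommClass G k R]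
    [CommRing S] [Algebra k S] [MulSemiringAction G S] [SMulCommClass G k S]
    (hR : IsTS k G R) (hS : IsTS k G S)
    (θ : R →ₐ[k] S) (hθ : IsEquivariant G ⇑θ) :
    (Function.Surjective ⇑θ ↔
      ∀ s : S, (∑ g : G, g • s) = 1 → ∃ r : R, (∑ g : G, g • r) = 1 ∧ θ r = s) ∧
    (Function.Injective ⇑θ ↔ Set.InjOn ⇑θ {r : R | (∑ g : G, g • r) = 1}) ∧
    ((∀ (X : Type u) [CommRing X] [Algebra k X] [MulSemiringAction G X] [SMulCommClass G k X],
        IsTS k G X →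
        ∀ (φ₁ φ₂ : X →ₐ[k] R), IsEquivariant G ⇑φ₁ → IsEquivariant G ⇑φ₂ →
          θ.comp φ₁ = θ.comp φ₂ → φ₁ = φ₂)
      ↔ Function.Injective ⇑θ) := by
  obtain ⟨w, hw⟩ := hR.2 1 (fun g => smul_one g)
  have trR1 : (∑ g : G, g • (1 : R)) = 0 := trace_one_eq_zero (k := k) p hp hG R
  have partb : Function.Injective ⇑θ ↔ Set.InjOn ⇑θ {r : R | (∑ g : G, g • r) = 1} := by
    constructor
    · intro hinj
      exact fun x _ y _ h => hinj h
    · intro hio a b hab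
      have hθd : θ (a - b) = 0 := by rw [map_sub, hab, sub_self]
      have hcinv : ∀ h : G, h • (∑ g : G, g • (a - b)) = (∑ g : G, g • (a - b)) :=
        fun h => trace_invariant h (a - b)
      have hθc : θ (∑ g : G, g • (a - b)) = 0 := by
        rw [map_trace θ hθ (a - b), hθd]
        simp
      have key : ∀ w' : R, (∑ g : G, g • w') = 1 →
          a - b = (∑ g : G, g • (a - b)) * w' := by
        intro w' hw'
        have hp2 : (∑ g : G, g • (w' + (a - b) - (∑ g : G, g • (a - b)) * w')) = 1 := by
          have h1 : ∀ g : G, g • (w' + (a - b) - (∑ g : G, g • (a - b)) * w')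
              = g • w' + g • (a - b) - (∑ g : G, g • (a - b)) * (g • w') := by
            intro g
            rw [smul_sub, smul_add, smul_mul', hcinv g]
          rw [Finset.sum_congr rfl (fun g _ => h1 g), Finset.sum_sub_distrib,
            Finset.sum_add_distrib, ← Finset.mul_sum, hw']
          ring
        have hθ2 : θ (w' + (a - b) - (∑ g : G, g • (a - b)) * w') = θ w' := by
          rw [map_sub, map_add, map_mul, hθd, hθc]
          ring
        have heq := hio hp2 hw' hθ2
        linear_combination heq
      have h1 := key w hw
      have hw1 : (∑ g : G, g • (w + 1)) = 1 := by
        rw [Finset.sum_congr rfl (fun g _ => smul_add g w 1), Finset.sum_add_distrib, trR1,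
          add_zero, hw]
      have h2 := key (w + 1) hw1
      have hc0 : (∑ g : G, g • (a - b)) = 0 := by linear_combination h1 - h2
      rw [hc0, zero_mul] at h1
      exact sub_eq_zero.mp h1
  have parta : Function.Surjective ⇑θ ↔
      ∀ s : S, (∑ g : G, g • s) = 1 → ∃ r : R, (∑ g : G, g • r) = 1 ∧ θ r = s := by
    constructor
    · intro hsurj s hs
      obtain ⟨t, ht⟩ := hsurj s
      have hcinv : ∀ h : G, h • (∑ g : G, g • t) = (∑ g : G, g • t) :=
        fun h => trace_invariant h t
      refine ⟨t + (1 - (∑ g : G, g • t)) * w, ?_, ?_⟩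
      · have hinv1 : ∀ g : G, g • (1 - (∑ g : G, g • t)) = 1 - (∑ g : G, g • t) := by
          intro g
          rw [smul_sub, smul_one, hcinv g]
        have e1 : ∀ g : G, g • (t + (1 - (∑ g : G, g • t)) * w)
            = g • t + (1 - (∑ g : G, g • t)) * (g • w) := by
          intro g
          rw [smul_add, smul_mul', hinv1 g]
        rw [Finset.sum_congr rfl (fun g _ => e1 g), Finset.sum_add_distrib,
          ← Finset.mul_sum, hw]
        ring
      · have hθc : θ (∑ g : G, g • t) = 1 := by
          rw [map_trace θ hθ t, ht, hs]
        rw [map_add, map_mul, map_sub, map_one, hθc, sub_self, zero_mul, add_zero, ht]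
    · intro hlift s
      have hws : (∑ g : G, g • θ w) = 1 := by
        rw [← map_trace θ hθ w, hw, map_one]
      have point_lift : ∀ u : S, (∑ g : G, g • u) = 1 → ∃ r : R, θ r = u :=
        fun u hu => (hlift u hu).imp fun r h => h.2
      have inv_lift : ∀ c : S, (∀ g : G, g • c = c) → ∃ r : R, θ r = c := by
        intro c hc
        have htrc : (∑ g : G, g • c) = 0 := by
          rw [Finset.sum_congr rfl (fun g _ => hc g), Finset.sum_const, Finset.card_univ,
            nsmul_eq_mul, card_eq_zero_in_alg (k := k) p hp hG S, zero_mul]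
        have hpt : (∑ g : G, g • (c + θ w)) = 1 := by
          rw [Finset.sum_congr rfl (fun g _ => smul_add g c (θ w)), Finset.sum_add_distrib,
            htrc, hws, zero_add]
        obtain ⟨r1, hr1⟩ := point_lift _ hpt
        exact ⟨r1 - w, by rw [map_sub, hr1]; ring⟩
      have hcinv : ∀ g : G, g • (∑ g : G, g • s) = (∑ g : G, g • s) :=
        fun g => trace_invariant g s
      obtain ⟨rc, hrc⟩ := inv_lift _ hcinv
      have hu : (∑ g : G, g • (s - (∑ g : G, g • s) * θ w + θ w)) = 1 := by
        have e1 : ∀ g : G, g • (s - (∑ g : G, g • s) * θ w + θ w)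
            = g • s - (∑ g : G, g • s) * (g • θ w) + g • θ w := by
          intro g
          rw [smul_add, smul_sub, smul_mul', hcinv g]
        rw [Finset.sum_congr rfl (fun g _ => e1 g), Finset.sum_add_distrib,
          Finset.sum_sub_distrib, ← Finset.mul_sum, hws]
        ring
      obtain ⟨ru, hru⟩ := point_lift _ hu
      exact ⟨ru + rc * w - w, by rw [map_sub, map_add, map_mul, hru, hrc]; ring⟩
  refine ⟨parta, partb, ?_, ?_⟩
  · intro hmono
    apply partb.mpr
    intro r₁ hr₁ r₂ hr₂ hθeq
    have hr₁' : (∑ g : G, g • r₁) = 1 := hr₁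
    have hr₂' : (∑ g : G, g • r₂) = 1 := hr₂
    have hcompeq : θ.comp (dressHom k G r₁ hr₁') = θ.comp (dressHom k G r₂ hr₂') := by
      apply Ideal.Quotient.algHom_ext k
      apply MvPolynomial.algHom_ext
      intro h
      simp only [AlgHom.comp_apply, Ideal.Quotient.mkₐ_eq_mk]
      rw [dressHom_mk, dressHom_mk, MvPolynomial.aeval_X, MvPolynomial.aeval_X,
        hθ, hθ, hθeq]
    have hφeq := hmono (DressAlg k G) (dress_isTS k G)
      (dressHom k G r₁ hr₁') (dressHom k G r₂ hr₂')
      (dressHom_equivariant k G r₁ hr₁') (dressHom_equivariant k G r₂ hr₂') hcompeq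
    have := DFunLike.congr_fun hφeq (dressPt k G)
    rwa [dressHom_pt, dressHom_pt] at this
  · intro hinj X _ _ _ _ hX φ₁ φ₂ _ _ hcomp
    exact AlgHom.ext fun x => hinj (DFunLike.congr_fun hcomp x)
end

section
/- Let k be a field of characteristic p > 0 and n ≥ 1. (1) In the polynomial ring k[X_1,…,X_{n−1},T], the n×n Moore determinant ∂_n(T) := det(M), where M has rows (X_1^{p^{i−1}},…,X_{n−1}^{p^{i−1}},T^{p^{i−1}}) for i = 1,…,n, factors as ∂_n(T) = ∂_{n−1}(X_{n−1}) · ∏_{x ∈ V}(T − x), where V is the set of all 𝔽_p-linear combinations of X_1,…,X_{n−1} and ∂_{n−1}(X_{n−1}) is the analogous (n−1)×(n−1) Moore determinant in X_1,…,X_{n−1}. (2) For α_1,…,α_n ∈ k, the determinant det((α_j^{p^{i−1}})_{1≤i,j≤n}) is nonzero if and only if α_1,…,α_n are linearly independent over the prime field 𝔽_p. -/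
universe u

open Polynomial

section MooreAux

variable {k : Type u} [Field k] {p : ℕ} [Fact p.Prime] [CharP k p]

lemma moore_comb_injective (m : ℕ) :
    Function.Injective (fun c : Fin m → ZMod p =>
      ∑ j : Fin m, MvPolynomial.C (ZMod.castHom (dvd_refl p) k (c j)) * MvPolynomial.X j) := by
  intro c c' h
  funext j
  apply (ZMod.castHom (dvd_refl p) k).injective
  have := congrArg (MvPolynomial.eval (fun i : Fin m => if i = j then (1:k) else 0)) h
  simpa [map_sum, mul_ite, Finset.sum_ite_eq'] using this

lemma moore_frob (m : ℕ) (r : ℕ) (c : Fin m → ZMod p) :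
    (∑ j : Fin m, MvPolynomial.C (ZMod.castHom (dvd_refl p) k (c j)) * MvPolynomial.X j) ^ p ^ r
      = ∑ j : Fin m,
          MvPolynomial.C (ZMod.castHom (dvd_refl p) k (c j)) * MvPolynomial.X j ^ p ^ r := by
  rw [sum_pow_char_pow]
  refine Finset.sum_congr rfl fun j _ => ?_
  rw [mul_pow, ← map_pow, ← map_pow, ZMod.pow_card_pow]

lemma moore_key (m : ℕ) [inst : DecidableEq (MvPolynomial (Fin m) k)] :
    (Matrix.det (Matrix.of fun i j : Fin (m + 1) =>
        if h : (j : ℕ) < m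
        then (Polynomial.C (MvPolynomial.X (⟨(j : ℕ), h⟩ : Fin m) :
                MvPolynomial (Fin m) k)) ^ p ^ (i : ℕ)
        else (Polynomial.X : Polynomial (MvPolynomial (Fin m) k)) ^ p ^ (i : ℕ))
      = Polynomial.C
          (Matrix.det (Matrix.of fun i j : Fin m =>
            (MvPolynomial.X j : MvPolynomial (Fin m) k) ^ p ^ (i : ℕ)))
        * ∏ x ∈ Finset.image
            (fun c : Fin m → ZMod p =>
              ∑ j : Fin m,
                MvPolynomial.C (ZMod.castHom (dvd_refl p) k (c j)) * MvPolynomial.X j)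
            Finset.univ,
            (Polynomial.X - Polynomial.C x)) := by
  haveI : NeZero p := ⟨(Fact.out : p.Prime).ne_zero⟩
  have hp1 : 1 < p := (Fact.out : p.Prime).one_lt
  set f : (Fin m → ZMod p) → MvPolynomial (Fin m) k := fun c =>
    ∑ j : Fin m, MvPolynomial.C (ZMod.castHom (dvd_refl p) k (c j)) * MvPolynomial.X j with hf
  set V : Finset (MvPolynomial (Fin m) k) := Finset.image f Finset.univ with hV
  set M : Matrix (Fin (m + 1)) (Fin (m + 1)) (Polynomial (MvPolynomial (Fin m) k)) :=
    Matrix.of fun i j : Fin (m + 1) =>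
      if h : (j : ℕ) < m
      then (Polynomial.C (MvPolynomial.X (⟨(j : ℕ), h⟩ : Fin m) : MvPolynomial (Fin m) k))
            ^ p ^ (i : ℕ)
      else (Polynomial.X : Polynomial (MvPolynomial (Fin m) k)) ^ p ^ (i : ℕ) with hM
  set Δ : MvPolynomial (Fin m) k :=
    Matrix.det (Matrix.of fun i j : Fin m =>
      (MvPolynomial.X j : MvPolynomial (Fin m) k) ^ p ^ (i : ℕ)) with hΔ
  set Q : Polynomial (MvPolynomial (Fin m) k) :=
    Polynomial.C Δ * ∏ x ∈ V, (Polynomial.X - Polynomial.C x) with hQ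
  set d : Fin (m + 1) → MvPolynomial (Fin m) k := fun i =>
    Matrix.det (Matrix.of fun i' j' : Fin m =>
      (MvPolynomial.X j' : MvPolynomial (Fin m) k) ^ p ^ ((i.succAbove i' : ℕ))) with hd
  -- Laplace expansion along the last column
  have expand : M.det = ∑ i : Fin (m + 1),
      Polynomial.C ((-1) ^ ((i : ℕ) + m) * d i) * Polynomial.X ^ p ^ (i : ℕ) := by
    rw [Matrix.det_succ_column M (Fin.last m)]
    refine Finset.sum_congr rfl fun i _ => ?_
    have h1 : M i (Fin.last m) = (Polynomial.X : Polynomial (MvPolynomial (Fin m) k)) ^ p ^ (i : ℕ) := by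
      simp [hM]
    have h2 : M.submatrix i.succAbove (Fin.last m).succAbove
        = (Polynomial.C : MvPolynomial (Fin m) k →+* _).mapMatrix
            (Matrix.of fun i' j' : Fin m =>
              (MvPolynomial.X j' : MvPolynomial (Fin m) k) ^ p ^ ((i.succAbove i' : ℕ))) := by
      ext i' j'
      simp only [Matrix.submatrix_apply, Fin.succAbove_last, hM, Matrix.of_apply,
        RingHom.mapMatrix_apply, Matrix.map_apply, Fin.coe_castSucc]
      rw [dif_pos j'.isLt]
      rw [← map_pow]
    rw [h1, h2, ← RingHom.map_det]
    rw [map_mul, map_pow, map_neg, map_one]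
    simp only [Fin.val_last]
    ring
  have hDdeg : M.det.natDegree ≤ p ^ m := by
    rw [expand]
    refine Polynomial.natDegree_sum_le_of_forall_le _ _ fun i _ => ?_
    refine le_trans (Polynomial.natDegree_C_mul_le _ _) ?_
    rw [Polynomial.natDegree_X_pow]
    exact Nat.pow_le_pow_right (le_of_lt hp1) (Fin.is_le i)
  have hDcoeff : M.det.coeff (p ^ m) = Δ := by
    rw [expand, Polynomial.finset_sum_coeff]
    rw [Finset.sum_eq_single_of_mem (Fin.last m) (Finset.mem_univ _)]
    · rw [Polynomial.coeff_C_mul, Polynomial.coeff_X_pow, if_pos (by simp)]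
      have hdlast : d (Fin.last m) = Δ := by
        rw [hd, hΔ]
        congr 1
        ext i' j'
        simp [Fin.succAbove_last]
      rw [hdlast]
      simp [Fin.val_last, mul_one]
    · intro i _ hi
      rw [Polynomial.coeff_C_mul, Polynomial.coeff_X_pow, if_neg, mul_zero]
      intro hpow
      exact hi (Fin.ext ((Nat.pow_right_injective hp1 hpow.symm).trans rfl))
  have hcardV : V.card = p ^ m := by
    rw [hV, Finset.card_image_of_injective _ (moore_comb_injective m), Finset.card_univ,
      Fintype.card_fun]
    simp [ZMod.card]
  have hmon : ∀ x ∈ V, (Polynomial.X - Polynomial.C x).Monic := fun x _ => monic_X_sub_C x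
  have hP0deg : (∏ x ∈ V, (Polynomial.X - Polynomial.C x)).natDegree = p ^ m := by
    rw [Polynomial.natDegree_prod_of_monic _ _ hmon]
    simp [hcardV]
  have hQdeg : Q.natDegree ≤ p ^ m := by
    refine le_trans (Polynomial.natDegree_mul_le) ?_
    simp [hP0deg]
  have hQcoeff : Q.coeff (p ^ m) = Δ := by
    rw [hQ, Polynomial.coeff_C_mul, ← hP0deg,
      (monic_prod_of_monic _ _ hmon).coeff_natDegree, mul_one]
  have heval : ∀ c : Fin m → ZMod p, (M.det - Q).eval (f c) = 0 := by
    intro c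
    have hQe : Q.eval (f c) = 0 := by
      rw [hQ, Polynomial.eval_mul, Polynomial.eval_prod]
      rw [Finset.prod_eq_zero (Finset.mem_image_of_mem f (Finset.mem_univ c)) (by simp)]
      rw [mul_zero]
    have hDe : M.det.eval (f c) = 0 := by
      have hmap : M.det.eval (f c)
          = ((Polynomial.evalRingHom (f c)).mapMatrix M).det :=
        RingHom.map_det (Polynomial.evalRingHom (f c)) M
      rw [hmap]
      rw [← Matrix.exists_mulVec_eq_zero_iff]
      refine ⟨Fin.snoc (fun j : Fin m =>
        (MvPolynomial.C (ZMod.castHom (dvd_refl p) k (c j)) : MvPolynomial (Fin m) k)) (-1),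
        ?_, ?_⟩
      · intro h0
        have := congrFun h0 (Fin.last m)
        simp [Fin.snoc_last] at this
      · funext i
        rw [Matrix.mulVec, dotProduct, Fin.sum_univ_castSucc]
        simp only [RingHom.mapMatrix_apply, Matrix.map_apply, Fin.snoc_castSucc, Fin.snoc_last,
          hM, Matrix.of_apply, Fin.coe_castSucc, Fin.val_last, Pi.zero_apply,
          Polynomial.coe_evalRingHom]
        rw [dif_neg (lt_irrefl m)]
        have hrow : ∀ j : Fin m, ((j : ℕ) < m → True) := fun _ _ => trivial
        have hsum : ∀ j : Fin m,
            (Polynomial.eval (f c) (if h : (j : ℕ) < m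
              then (Polynomial.C (MvPolynomial.X (⟨(j : ℕ), h⟩ : Fin m) :
                    MvPolynomial (Fin m) k)) ^ p ^ (i : ℕ)
              else (Polynomial.X : Polynomial (MvPolynomial (Fin m) k)) ^ p ^ (i : ℕ)))
              = MvPolynomial.X j ^ p ^ (i : ℕ) := by
          intro j
          rw [dif_pos j.isLt]
          simp
        simp only [hsum]
        rw [Polynomial.eval_pow, Polynomial.eval_X, hf]
        rw [moore_frob m (i : ℕ) c]
        rw [Finset.sum_mul]  -- maybe not needed
        ring_nf
        rw [← Finset.sum_add_distrib]
        exact Finset.sum_eq_zero fun j _ => by ring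
    rw [Polynomial.eval_sub, hQe, hDe, sub_zero]
  -- conclude
  by_contra hne
  have hEne : M.det - Q ≠ 0 := sub_ne_zero.mpr hne
  have hdegle : (M.det - Q).natDegree ≤ p ^ m :=
    le_trans (Polynomial.natDegree_sub_le _ _) (max_le hDdeg hQdeg)
  have hdeglt : (M.det - Q).natDegree < p ^ m := by
    rcases lt_or_eq_of_le hdegle with h | h
    · exact h
    · exfalso
      have : (M.det - Q).leadingCoeff = 0 := by
        rw [Polynomial.leadingCoeff, h, Polynomial.coeff_sub, hDcoeff, hQcoeff, sub_self]
      exact Polynomial.leadingCoeff_ne_zero.mpr hEne this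
  have : M.det - Q = 0 := by
    refine Polynomial.eq_zero_of_natDegree_lt_card_of_eval_eq_zero _
      (moore_comb_injective m) heval ?_
    simpa [Fintype.card_fun, ZMod.card] using hdeglt
  exact hEne this


lemma moore_indep (m : ℕ) (α : Fin m → k) :
    Matrix.det (Matrix.of fun i j : Fin m => α j ^ p ^ (i : ℕ)) ≠ 0 ↔
      ∀ c : Fin m → ZMod p,
        (∑ i : Fin m, ZMod.castHom (dvd_refl p) k (c i) * α i) = 0 → c = 0 := by
  induction m with
  | zero =>
      simp only [Matrix.det_fin_zero]
      exact ⟨fun _ c _ => funext fun i => i.elim0, fun _ => one_ne_zero⟩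
  | succ m ih =>
      classical
      have key := moore_key (k := k) (p := p) m
      set φ : Polynomial (MvPolynomial (Fin m) k) →+* k :=
        Polynomial.eval₂RingHom
          (MvPolynomial.eval (fun j : Fin m => α j.castSucc)) (α (Fin.last m)) with hφ
      have him := congrArg φ key
      rw [RingHom.map_det, map_mul, map_prod] at him
      have hMα : φ.mapMatrix (Matrix.of fun i j : Fin (m + 1) =>
          if h : (j : ℕ) < m
          then (Polynomial.C (MvPolynomial.X (⟨(j : ℕ), h⟩ : Fin m) :
                  MvPolynomial (Fin m) k)) ^ p ^ (i : ℕ)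
          else (Polynomial.X : Polynomial (MvPolynomial (Fin m) k)) ^ p ^ (i : ℕ))
          = Matrix.of (fun i j : Fin (m + 1) => α j ^ p ^ (i : ℕ)) := by
        ext i j
        simp only [RingHom.mapMatrix_apply, Matrix.map_apply, Matrix.of_apply]
        by_cases h : (j : ℕ) < m
        · rw [dif_pos h, map_pow]
          congr 1
          rw [hφ]
          simp only [Polynomial.coe_eval₂RingHom, Polynomial.eval₂_C, MvPolynomial.eval_X]
          exact congrArg α (Fin.ext (by simp))
        · rw [dif_neg h, map_pow]
          congr 1
          have hj : j = Fin.last m :=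
            Fin.ext (le_antisymm (Nat.lt_succ_iff.mp j.isLt) (not_lt.mp h))
          rw [hj, hφ]
          simp [Polynomial.coe_eval₂RingHom]
      have hC : φ (Polynomial.C (Matrix.det (Matrix.of fun i j : Fin m =>
            (MvPolynomial.X j : MvPolynomial (Fin m) k) ^ p ^ (i : ℕ))))
          = Matrix.det (Matrix.of fun i j : Fin m => α j.castSucc ^ p ^ (i : ℕ)) := by
        rw [hφ]
        simp only [Polynomial.coe_eval₂RingHom, Polynomial.eval₂_C]
        rw [RingHom.map_det]
        congr 1
        ext i j
        simp
      rw [hMα, hC] at him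
      have hprod : ∏ x ∈ Finset.image
            (fun c : Fin m → ZMod p =>
              ∑ j : Fin m,
                MvPolynomial.C (ZMod.castHom (dvd_refl p) k (c j)) * MvPolynomial.X j)
            Finset.univ, φ (Polynomial.X - Polynomial.C x)
          = ∏ c : Fin m → ZMod p,
              (α (Fin.last m) - ∑ j : Fin m,
                ZMod.castHom (dvd_refl p) k (c j) * α j.castSucc) := by
        rw [Finset.prod_image (fun x _ y _ h => moore_comb_injective (k := k) (p := p) m h)]
        refine Finset.prod_congr rfl fun c _ => ?_
        rw [hφ]
        simp only [Polynomial.coe_eval₂RingHom, Polynomial.eval₂_sub, Polynomial.eval₂_X,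
          Polynomial.eval₂_C, map_sum, map_mul, Polynomial.eval₂_mul,
          Polynomial.eval₂_finset_sum, MvPolynomial.eval_C, MvPolynomial.eval_X]
      rw [hprod] at him
      rw [him, mul_ne_zero_iff, Finset.prod_ne_zero_iff]
      simp only [Finset.mem_univ, forall_true_left, sub_ne_zero, true_implies]
      rw [ih (fun j => α j.castSucc)]
      constructor
      · rintro ⟨h1, h2⟩ c hc
        rw [Fin.sum_univ_castSucc] at hc
        by_cases h0 : c (Fin.last m) = 0
        · have hz : (fun j : Fin m => c j.castSucc) = 0 := by
            apply h1
            simpa [h0] using hc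
          funext i
          refine Fin.lastCases h0 (fun j => ?_) i
          exact congrFun hz j
        · exfalso
          apply h2 (fun j => -((c (Fin.last m))⁻¹ * c j.castSucc))
          have hne : (ZMod.castHom (dvd_refl p) k) (c (Fin.last m)) ≠ 0 :=
            fun hzz => h0 ((ZMod.castHom (dvd_refl p) k).injective (by simpa using hzz))
          have hkey : ∑ j : Fin m,
              (ZMod.castHom (dvd_refl p) k) (c j.castSucc) * α j.castSucc
              = -((ZMod.castHom (dvd_refl p) k) (c (Fin.last m)) * α (Fin.last m)) :=
            eq_neg_of_add_eq_zero_left hc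
          have hstep : ∑ j : Fin m,
              (ZMod.castHom (dvd_refl p) k) (-((c (Fin.last m))⁻¹ * c j.castSucc))
                * α j.castSucc
              = -(((ZMod.castHom (dvd_refl p) k) (c (Fin.last m)))⁻¹
                  * ∑ j : Fin m,
                    (ZMod.castHom (dvd_refl p) k) (c j.castSucc) * α j.castSucc) := by
            rw [Finset.mul_sum, ← Finset.sum_neg_distrib]
            refine Finset.sum_congr rfl fun j _ => ?_
            rw [map_neg, map_mul, map_inv₀]
            ring
          rw [hstep, hkey]
          rw [mul_neg, neg_neg, ← mul_assoc, inv_mul_cancel₀ hne, one_mul]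
      · intro h
        constructor
        · intro c' hc'
          have hsum : ∑ i : Fin (m + 1),
              ZMod.castHom (dvd_refl p) k ((Fin.snoc c' (0 : ZMod p) : Fin (m+1) → ZMod p) i) * α i = 0 := by
            rw [Fin.sum_univ_castSucc]
            simpa [Fin.snoc_castSucc, Fin.snoc_last] using hc'
          funext j
          have := congrFun (h _ hsum) (Fin.castSucc j)
          simpa [Fin.snoc_castSucc] using this
        · intro c heq
          have hsum : ∑ i : Fin (m + 1),
              ZMod.castHom (dvd_refl p) k ((Fin.snoc (fun j => -c j) (1 : ZMod p) : Fin (m+1) → ZMod p) i) * α i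
              = 0 := by
            rw [Fin.sum_univ_castSucc]
            simp only [Fin.snoc_castSucc, Fin.snoc_last, map_one, map_neg, one_mul, neg_mul]
            rw [Finset.sum_neg_distrib, heq]
            ring
          have h1 := congrFun (h _ hsum) (Fin.last m)
          simp [Fin.snoc_last] at h1

end MooreAux

/-- Moore determinants.  Let `k` be a field of characteristic `p > 0`
and `n ≥ 1`.
(1) In `k[X₁,…,X_{n−1}][T]`, the `n × n` Moore determinant `∂_n(T)` (rows
`(X₁^{p^{i−1}},…,X_{n−1}^{p^{i−1}},T^{p^{i−1}})`) factors as
`∂_n(T) = ∂_{n−1}(X_{n−1}) · ∏_{x ∈ V} (T − x)`, where `V` is the set of all `𝔽_p`-linear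
combinations of `X₁,…,X_{n−1}` and `∂_{n−1}(X_{n−1})` is the `(n−1) × (n−1)` Moore
determinant of `X₁,…,X_{n−1}`.
(2) For `α₁,…,α_n ∈ k`, `det((α_j^{p^{i−1}})) ≠ 0` iff `α₁,…,α_n` are linearly
independent over the prime field `𝔽_p`. -/
theorem moore_determinant_factorization_and_nonvanishing
    (k : Type u) [Field k] (p : ℕ) (hp : p.Prime) [Fact p.Prime] [CharP k p] (n : ℕ) (hn : 1 ≤ n) :
    letI : DecidableEq (MvPolynomial (Fin (n - 1)) k) := Classical.decEq _
    (Matrix.det (Matrix.of fun i j : Fin n =>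
        if h : (j : ℕ) < n - 1
        then (Polynomial.C (MvPolynomial.X (⟨(j : ℕ), h⟩ : Fin (n - 1)) :
                MvPolynomial (Fin (n - 1)) k)) ^ p ^ (i : ℕ)
        else (Polynomial.X : Polynomial (MvPolynomial (Fin (n - 1)) k)) ^ p ^ (i : ℕ))
      = Polynomial.C
          (Matrix.det (Matrix.of fun i j : Fin (n - 1) =>
            (MvPolynomial.X j : MvPolynomial (Fin (n - 1)) k) ^ p ^ (i : ℕ)))
        * ∏ x ∈ Finset.image
            (fun c : Fin (n - 1) → ZMod p =>
              ∑ j : Fin (n - 1),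
                MvPolynomial.C (ZMod.castHom (dvd_refl p) k (c j)) * MvPolynomial.X j)
            Finset.univ,
            (Polynomial.X - Polynomial.C x)) ∧
    (∀ α : Fin n → k,
      Matrix.det (Matrix.of fun i j : Fin n => α j ^ p ^ (i : ℕ)) ≠ 0 ↔
        ∀ c : Fin n → ZMod p,
          (∑ i : Fin n, ZMod.castHom (dvd_refl p) k (c i) * α i) = 0 → c = 0) := by
  obtain ⟨m, rfl⟩ : ∃ m, n = m + 1 := ⟨n - 1, (Nat.succ_pred_eq_of_pos hn).symm⟩
  letI : DecidableEq (MvPolynomial (Fin m) k) := Classical.decEq _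
  exact ⟨moore_key (k := k) (p := p) m, fun α => moore_indep (m + 1) α⟩
end
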